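/- arXiv:1207.5329 — 2 statements merged into one kernel-verified Lean document; each statement's English description precedes it below -/
import Mathlib

section
/- Let k be a positive integer and let G be a connected graph that contains no internal i-edge cut for any i ∈ {1, …, k−1}. If v, v_1, …, v_i are distinct vertices of G with i ∈ {1, …, k−1} and the degree of v in G is at least i, then there exist i pairwise edge-disjoint paths in G from v to v_1, v_2, …, v_i (one path to each v_j). -/
attribute [local instance] Classical.propDecidable

set_option autoImplicit false

noncomputable section

/-- A finite undirected loopless multigraph: a finite type of vertices, a finite type of
edges, and a map assigning to every edge its (unordered) pair of distinct endpoints. -/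
structure Multigraph : Type 1 where
  V : Type
  E : Type
  finV : Finite V
  finE : Finite E
  ends : E → Sym2 V
  loopless : ∀ e, ¬ (ends e).IsDiag

attribute [instance] Multigraph.finV Multigraph.finE

namespace Multigraph

variable {G : Multigraph}

/-- Walks in a multigraph, recorded together with their two endpoints. -/
inductive Walk (G : Multigraph) : G.V → G.V → Type where
  | nil {v : G.V} : Walk G v v
  | cons {u v w : G.V} (e : G.E) (h : G.ends e = s(u, v)) (t : Walk G v w) : Walk G u w

namespace Walk

/-- The list of edges traversed by a walk. -/
def edges : ∀ {u v : G.V}, G.Walk u v → List G.E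
  | _, _, nil => []
  | _, _, cons e _ t => e :: t.edges

/-- The list of vertices visited by a walk (in order). -/
def support : ∀ {u v : G.V}, G.Walk u v → List G.V
  | u, _, nil => [u]
  | u, _, cons _ _ t => u :: t.support

/-- Concatenation of walks. -/
def append : ∀ {u v w : G.V}, G.Walk u v → G.Walk v w → G.Walk u w
  | _, _, _, nil, q => q
  | _, _, _, cons e h t, q => cons e h (t.append q)

/-- Reversal of a walk. -/
def reverse : ∀ {u v : G.V}, G.Walk u v → G.Walk v u
  | _, _, nil => nil
  | _, _, cons e h t => t.reverse.append (cons e (by rw [h]; exact Sym2.eq_swap) nil)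

/-- A walk is a path if it visits no vertex twice.  (A single vertex is a trivial path.) -/
def IsPath {u v : G.V} (w : G.Walk u v) : Prop := w.support.Nodup

/-- A closed walk is a cycle if it uses at least one edge, repeats no edge, and repeats
no vertex except that it ends where it started. -/
def IsCycle {v : G.V} (w : G.Walk v v) : Prop :=
  w.edges ≠ [] ∧ w.edges.Nodup ∧ w.support.tail.Nodup

/-- The set of edges of a walk. -/
def edgeSet {u v : G.V} (w : G.Walk u v) : Set G.E := {e | e ∈ w.edges}

/-- The set of vertices of a walk. -/
def supportSet {u v : G.V} (w : G.Walk u v) : Set G.V := {x | x ∈ w.support}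

end Walk

/-- Two walks are edge-disjoint if they share no edge. -/
def EdgeDisjoint {u v u' v' : G.V} (p : G.Walk u v) (q : G.Walk u' v') : Prop :=
  ∀ e : G.E, e ∈ p.edges → e ∉ q.edges

/-- Two vertices are reachable from one another if some walk joins them. -/
def Reachable (G : Multigraph) (u v : G.V) : Prop := Nonempty (G.Walk u v)

/-- Reachability is an equivalence relation. -/
def reachSetoid (G : Multigraph) : Setoid G.V :=
  ⟨G.Reachable,
    ⟨fun _ => ⟨Walk.nil⟩, fun ⟨w⟩ => ⟨w.reverse⟩, fun ⟨w⟩ ⟨w'⟩ => ⟨w.append w'⟩⟩⟩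

/-- A multigraph is connected if every two vertices are joined by a walk. -/
def Connected (G : Multigraph) : Prop := ∀ u v : G.V, G.Reachable u v

/-- The number of connected components. -/
def numComponents (G : Multigraph) : ℕ := Nat.card (Quotient G.reachSetoid)

/-- A set of vertices is connected in `G` if any two of its vertices are joined by a
walk staying inside the set. -/
def ConnectedIn (G : Multigraph) (S : Set G.V) : Prop :=
  ∀ u ∈ S, ∀ v ∈ S, ∃ w : G.Walk u v, ∀ x ∈ w.support, x ∈ S

/-- Reachability inside a prescribed set of vertices, using only a prescribed
set of edges. -/
def ReachableWithin (G : Multigraph) (W : Set G.V) (E₀ : Set G.E) (u v : G.V) : Prop :=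
  ∃ w : G.Walk u v, (∀ x ∈ w.support, x ∈ W) ∧ ∀ e ∈ w.edges, e ∈ E₀

/-- The degree of a vertex: the number of edges incident to it. -/
def degree (G : Multigraph) (v : G.V) : ℕ := Nat.card {e : G.E // v ∈ G.ends e}

/-- A multigraph is sub-cubic if all its vertices have degree at most `3`. -/
def SubCubic (G : Multigraph) : Prop := ∀ v : G.V, G.degree v ≤ 3

/-- Deletion of a set of edges. -/
def deleteEdges (G : Multigraph) (F : Set G.E) : Multigraph where
  V := G.V
  E := {e : G.E // e ∉ F}
  finV := G.finV
  finE := inferInstance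
  ends := fun e => G.ends e.1
  loopless := fun e => G.loopless e.1

/-- An edge cut: a non-empty set of edges, all lying in one connected component,
whose deletion increases the number of connected components. -/
def IsEdgeCut (G : Multigraph) (F : Set G.E) : Prop :=
  F.Nonempty ∧
  (∀ e ∈ F, ∀ e' ∈ F, ∀ u v : G.V, u ∈ G.ends e → v ∈ G.ends e' → G.Reachable u v) ∧
  G.numComponents < (G.deleteEdges F).numComponents

/-- A minimal edge cut: its deletion produces exactly one more connected component. -/
def IsMinimalEdgeCut (G : Multigraph) (F : Set G.E) : Prop :=
  G.IsEdgeCut F ∧ (G.deleteEdges F).numComponents = G.numComponents + 1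

/-- An internal edge cut: a minimal edge cut such that both connected components into
which the component of `G` containing the cut is split have at least `2` vertices.
(Equivalently: every vertex of the component of `G` containing the cut lies, after
deletion of the cut, in a component with at least `2` vertices.) -/
def IsInternalEdgeCut (G : Multigraph) (F : Set G.E) : Prop :=
  G.IsMinimalEdgeCut F ∧
  ∀ v : G.V, (∃ e ∈ F, ∃ u ∈ G.ends e, G.Reachable v u) →
    2 ≤ Nat.card {u : G.V | (G.deleteEdges F).Reachable u v}

/-- `H` is immersed in `G`: there is an injection `f` of the vertices of `H` into the
vertices of `G`, and for every edge `{u,v}` of `H` a path in `G` from `f u` to `f v`,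
these paths being pairwise edge-disjoint. -/
def Immersion (H G : Multigraph) : Prop :=
  ∃ f : H.V → G.V, Function.Injective f ∧
    ∃ P : H.E → Σ a : G.V, Σ b : G.V, G.Walk a b,
      (∀ e : H.E, (P e).2.2.IsPath) ∧
      (∀ e : H.E, (H.ends e).map f = s((P e).1, (P e).2.1)) ∧
      ∀ e e' : H.E, e ≠ e' → EdgeDisjoint (P e).2.2 (P e').2.2

/-- The complete graph on five vertices. -/
def K5 : Multigraph where
  V := Fin 5
  E := {p : Sym2 (Fin 5) // ¬ p.IsDiag}
  finV := inferInstance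
  finE := inferInstance
  ends := fun e => e.1
  loopless := fun e => e.2

/-- The complete bipartite graph with two parts of three vertices. -/
def K33 : Multigraph where
  V := Fin 3 ⊕ Fin 3
  E := Fin 3 × Fin 3
  finV := inferInstance
  finE := inferInstance
  ends := fun p => s(Sum.inl p.1, Sum.inr p.2)
  loopless := fun p h => by
    rw [Sym2.mk_isDiag_iff] at h
    cases h

private lemma contract_key {α : Type} (S : Set α) (z : Sym2 α) :
    ¬ z.IsDiag → (¬ ∀ v ∈ z, v ∈ S) →
    ¬ (z.map fun v =>
        if h : v ∈ S then (Sum.inr () : {v : α // v ∉ S} ⊕ Unit) else Sum.inl ⟨v, h⟩).IsDiag := by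
  induction z using Sym2.ind with
  | _ a b =>
    intro hdiag hS h
    rw [Sym2.map_pair_eq, Sym2.mk_isDiag_iff] at h
    by_cases ha : a ∈ S <;> by_cases hb : b ∈ S
    · exact hS fun v hv => by rcases Sym2.mem_iff.mp hv with rfl | rfl <;> assumption
    · rw [dif_pos ha, dif_neg hb] at h
      cases h
    · rw [dif_neg ha, dif_pos hb] at h
      cases h
    · rw [dif_neg ha, dif_neg hb] at h
      injection h with h'
      exact hdiag (Sym2.mk_isDiag_iff.mpr (congrArg Subtype.val h'))

/-- Contraction of a set `S` of vertices of `G` to a single new vertex: edges lying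
entirely inside `S` disappear, edges meeting `S` are redirected to the new vertex.
(When `S` induces a connected subgraph this is the result of contracting all its edges.) -/
def contractSet (G : Multigraph) (S : Set G.V) : Multigraph where
  V := {v : G.V // v ∉ S} ⊕ Unit
  E := {e : G.E // ¬ ∀ v ∈ G.ends e, v ∈ S}
  finV := inferInstance
  finE := inferInstance
  ends := fun e => (G.ends e.1).map fun v =>
    if h : v ∈ S then Sum.inr () else Sum.inl ⟨v, h⟩
  loopless := fun e => contract_key S (G.ends e.1) (G.loopless e.1) e.2

/-- The graph obtained from `G` by subdividing every edge exactly once: each edge `e`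
is replaced by a new vertex joined to the two endpoints of `e`. -/
def subdivision (G : Multigraph) : Multigraph where
  V := G.V ⊕ G.E
  E := Σ e : G.E, {v : G.V // v ∈ G.ends e}
  finV := inferInstance
  finE := inferInstance
  ends := fun p => s(Sum.inl p.2.1, Sum.inr p.1)
  loopless := fun p h => by
    rw [Sym2.mk_isDiag_iff] at h
    cases h

/-- The multigraph associated with a simple graph. -/
def ofSimpleGraph {α : Type} [Finite α] (H : SimpleGraph α) : Multigraph where
  V := α
  E := {p : Sym2 α // p ∈ H.edgeSet}
  finV := ‹Finite α›
  finE := inferInstance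
  ends := fun e => e.1
  loopless := fun e => H.not_isDiag_of_mem_edgeSet e.2

/-- The `(r,q)`-cylinder: the cartesian product of a cycle on `r` vertices and a path
on `q` vertices. -/
def cylinder (r q : ℕ) : Multigraph :=
  ofSimpleGraph ((SimpleGraph.cycleGraph r).boxProd (SimpleGraph.pathGraph q))

/-- `H` is a minor of `G`: there are pairwise disjoint nonempty connected branch sets
`β u ⊆ V(G)`, one for every vertex `u` of `H`, and an injection `φ` of the edges of `H`
into the edges of `G` such that the edge `φ e` joins the branch sets of the two
endpoints of `e`. -/
def IsMinor (H G : Multigraph) : Prop :=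
  ∃ β : H.V → Set G.V, ∃ φ : H.E → G.E,
    Function.Injective φ ∧
    (∀ u : H.V, (β u).Nonempty) ∧
    (∀ u : H.V, G.ConnectedIn (β u)) ∧
    (∀ u v : H.V, u ≠ v → Disjoint (β u) (β v)) ∧
    ∀ (e : H.E) (u v : H.V), H.ends e = s(u, v) →
      ∃ x y : G.V, G.ends (φ e) = s(x, y) ∧ x ∈ β u ∧ y ∈ β v

/-- The degree of a vertex of a simple graph (number of neighbours). -/
def simpleDegree {n : ℕ} (T : SimpleGraph (Fin n)) (v : Fin n) : ℕ :=
  Nat.card {u : Fin n // T.Adj v u}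

/-- A branch decomposition of `G`: a ternary tree `T` together with a bijection between
the edges of `G` and the leaves of `T`. -/
structure BranchDecomposition (G : Multigraph) where
  n : ℕ
  T : SimpleGraph (Fin n)
  acyclic : T.IsAcyclic
  preconnected : T.Preconnected
  ternary : ∀ v : Fin n, simpleDegree T v ≤ 1 ∨ simpleDegree T v = 3
  leafEquiv : G.E ≃ {v : Fin n // simpleDegree T v ≤ 1}

/-- For an edge `{a,b}` of the tree of a branch decomposition, the number of vertices of
`G` incident both with an edge mapped to a leaf on the side of `a` and with an edge
mapped to a leaf on the side of `b` (sides taken in `T` minus the edge `{a,b}`). -/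
def BranchDecomposition.sigmaWidth {G : Multigraph} (B : BranchDecomposition G)
    (a b : Fin B.n) : ℕ :=
  Nat.card {x : G.V | ∃ e₁ e₂ : G.E, x ∈ G.ends e₁ ∧ x ∈ G.ends e₂ ∧
    (B.T.deleteEdges {s(a, b)}).Reachable (B.leafEquiv e₁).1 a ∧
    (B.T.deleteEdges {s(a, b)}).Reachable (B.leafEquiv e₂).1 b}

/-- The width of a branch decomposition. -/
def BranchDecomposition.width {G : Multigraph} (B : BranchDecomposition G) : ℕ :=
  sSup {w : ℕ | ∃ a b : Fin B.n, B.T.Adj a b ∧ w = B.sigmaWidth a b}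

/-- The branch-width of `G`: the minimum width of a branch decomposition of `G`. -/
def branchwidth (G : Multigraph) : ℕ :=
  sInf {w : ℕ | ∃ B : BranchDecomposition G, B.width = w}

/-- A (topological) embedding of the multigraph `G` in the space `X`: vertices become
distinct points, edges become arcs joining the images of their endpoints, arcs meet
vertex images only at their endpoints and meet each other only at images of vertices. -/
structure EmbeddingIn (G : Multigraph) (X : Type) [TopologicalSpace X] where
  vmap : G.V → X
  emap : G.E → unitInterval → X
  vmap_inj : Function.Injective vmap
  emap_cont : ∀ e, Continuous (emap e)
  emap_inj : ∀ e, Function.Injective (emap e)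
  emap_ends : ∀ e, (G.ends e).map vmap = s(emap e 0, emap e 1)
  emap_vertex : ∀ e t, emap e t ∈ Set.range vmap → t = 0 ∨ t = 1
  emap_disjoint : ∀ e e', e ≠ e' → ∀ t t', emap e t = emap e' t' →
    emap e t ∈ Set.range vmap

variable {X : Type} [TopologicalSpace X]

/-- The set of points of `X` occupied by the embedded graph. -/
def EmbeddingIn.carrier (emb : EmbeddingIn G X) : Set X :=
  Set.range emb.vmap ∪ ⋃ e : G.E, Set.range (emb.emap e)

/-- The set of points of `X` occupied by an embedded walk. -/
def EmbeddingIn.walkImage (emb : EmbeddingIn G X) {u v : G.V} (w : G.Walk u v) : Set X :=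
  (emb.vmap '' w.supportSet) ∪ ⋃ e ∈ w.edges, Set.range (emb.emap e)

/-- An open disk in `X`: an open set homeomorphic to an open disk of the plane. -/
def IsOpenDisk (U : Set X) : Prop :=
  IsOpen U ∧ Nonempty (↥U ≃ₜ ↥(Metric.ball (0 : EuclideanSpace ℝ (Fin 2)) 1))

/-- A disk around the vertex `x`: an open disk containing (the image of) `x` all of
whose points on the graph are `x` itself or lie on edges incident with `x`. -/
def EmbeddingIn.IsDiskAround (emb : EmbeddingIn G X) (x : G.V) (Δ : Set X) : Prop :=
  IsOpenDisk Δ ∧ emb.vmap x ∈ Δ ∧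
  ∀ p ∈ Δ ∩ emb.carrier,
    p = emb.vmap x ∨ ∃ e : G.E, x ∈ G.ends e ∧ p ∈ Set.range (emb.emap e)

/-- Two edge-disjoint walks are confluent if for every common vertex `x` that is not an
endpoint of either of them and every disk `Δ` around `x`, one of the connected
components of `Δ` minus the first walk contains no point of the second walk. -/
def Confluent (emb : EmbeddingIn G X) {u₁ w₁ u₂ w₂ : G.V}
    (P₁ : G.Walk u₁ w₁) (P₂ : G.Walk u₂ w₂) : Prop :=
  ∀ x : G.V, x ∈ P₁.support → x ∈ P₂.support →
    x ≠ u₁ → x ≠ w₁ → x ≠ u₂ → x ≠ w₂ →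
    ∀ Δ : Set X, emb.IsDiskAround x Δ →
      ∃ p ∈ Δ \ emb.walkImage P₁,
        connectedComponentIn (Δ \ emb.walkImage P₁) p ∩ emb.walkImage P₂ = ∅

/-- `x` is an overlapping vertex of `P₁` and `P₂`: a common vertex, not an endpoint of
either walk, such that for some disk `Δ` around `x` both connected components of `Δ`
minus `P₁` contain points of `P₂`. -/
def OverlapVertex (emb : EmbeddingIn G X) (x : G.V) {u₁ w₁ u₂ w₂ : G.V}
    (P₁ : G.Walk u₁ w₁) (P₂ : G.Walk u₂ w₂) : Prop :=
  x ∈ P₁.support ∧ x ∈ P₂.support ∧ x ≠ u₁ ∧ x ≠ w₁ ∧ x ≠ u₂ ∧ x ≠ w₂ ∧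
  ∃ Δ : Set X, emb.IsDiskAround x Δ ∧
    ∀ p ∈ Δ \ emb.walkImage P₁,
      (connectedComponentIn (Δ \ emb.walkImage P₁) p ∩ emb.walkImage P₂).Nonempty

/-- Two walks with the same first vertex are well-arranged if their common vertices
appear in the same order in both. -/
def WellArranged {u v₁ v₂ : G.V} (P₁ : G.Walk u v₁) (P₂ : G.Walk u v₂) : Prop :=
  P₁.support.filter (fun x => decide (x ∈ P₂.support)) =
    P₂.support.filter (fun x => decide (x ∈ P₁.support))

/-- `f_𝒫(x)`: the number of pairs of walks of the collection `P` for which `x` is an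
overlapping vertex. -/
def overlapCount (emb : EmbeddingIn G X) {r : ℕ} {v : G.V} {vs : Fin r → G.V}
    (P : (i : Fin r) → G.Walk v (vs i)) (x : G.V) : ℕ :=
  Nat.card {p : Fin r × Fin r // p.1 < p.2 ∧
    (OverlapVertex emb x (P p.1) (P p.2) ∨ OverlapVertex emb x (P p.2) (P p.1))}

/-- `g(𝒫)`: the sum over all vertices `x` of `f_𝒫(x)`. -/
def gFun (emb : EmbeddingIn G X) {r : ℕ} {v : G.V} {vs : Fin r → G.V}
    (P : (i : Fin r) → G.Walk v (vs i)) : ℕ :=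
  ∑ᶠ x : G.V, overlapCount emb P x

/-- The 2-dimensional sphere. -/
abbrev Sphere2 : Type := ↥(Metric.sphere (0 : EuclideanSpace ℝ (Fin 3)) 1)

/-- A multigraph is planar if it embeds in the sphere. -/
def Planar (G : Multigraph) : Prop := Nonempty (EmbeddingIn G Sphere2)

/-- The annulus between two disjoint cycles with point sets `K₁`, `K₂` on the sphere:
the complement of the two open disks `Δᵢ` bounded by `Kᵢ` containing no point of the
other cycle. -/
def annulusBetween (K₁ K₂ : Set Sphere2) : Set Sphere2 :=
  ({x : Sphere2 | x ∉ K₁ ∧ connectedComponentIn K₁ᶜ x ∩ K₂ = ∅} ∪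
   {x : Sphere2 | x ∉ K₂ ∧ connectedComponentIn K₂ᶜ x ∩ K₁ = ∅})ᶜ

/-- A collection of `r` pairwise disjoint cycles embedded in the sphere is nested if
consecutive annuli between them compose. -/
def NestedCycles (emb : EmbeddingIn G Sphere2) (r : ℕ) (c : Fin r → G.V)
    (C : (i : Fin r) → G.Walk (c i) (c i)) : Prop :=
  (∀ i, (C i).IsCycle) ∧
  (∀ i j : Fin r, i ≠ j → ∀ x, x ∈ (C i).support → x ∉ (C j).support) ∧
  ∀ (i : Fin r) (h2 : i.1 + 2 < r),
    annulusBetween (emb.walkImage (C i)) (emb.walkImage (C ⟨i.1 + 1, by omega⟩)) ∪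
      annulusBetween (emb.walkImage (C ⟨i.1 + 1, by omega⟩))
        (emb.walkImage (C ⟨i.1 + 2, h2⟩)) =
    annulusBetween (emb.walkImage (C i)) (emb.walkImage (C ⟨i.1 + 2, h2⟩))

/-- The intersection of the walks `P` and `C` is a (possibly trivial) path: the common
vertices and common edges of `P` and `C` are exactly those of some path, in particular
`P` meets `C`. -/
def IsPathIntersection (G : Multigraph) {a b c d : G.V}
    (P : G.Walk a b) (C : G.Walk c d) : Prop :=
  ∃ (x y : G.V) (Q : G.Walk x y), Q.IsPath ∧
    Q.supportSet = P.supportSet ∩ C.supportSet ∧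
    Q.edgeSet = P.edgeSet ∩ C.edgeSet

/-- `G`, embedded in the sphere by `emb`, contains an `(r,q)`-railed annulus: `r` nested
pairwise disjoint cycles all met by `q` paths (rails), the intersection of each rail
with each cycle being a (possibly trivial) path. -/
def HasRailedAnnulus (G : Multigraph) (emb : EmbeddingIn G Sphere2) (r q : ℕ) : Prop :=
  ∃ (c : Fin r → G.V) (C : (i : Fin r) → G.Walk (c i) (c i)),
    NestedCycles emb r c C ∧
    ∃ (a b : Fin q → G.V) (P : (j : Fin q) → G.Walk (a j) (b j)),
      (∀ j, (P j).IsPath) ∧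
      ∀ (i : Fin r) (j : Fin q), IsPathIntersection G (P j) (C i)

/-- `G` is a `k`-edge-sum of `G₁` and `G₂`: there are vertices `v₁` of `G₁` and `v₂` of
`G₂`, both of degree `k`, and a bijection `σ` between the edges at `v₁` and the edges at
`v₂`, such that `G` is obtained from the disjoint union of `G₁` and `G₂` by deleting
`v₁` and `v₂` and lifting every pair `e`, `σ e` to a single new edge. -/
def IsEdgeSum (G G₁ G₂ : Multigraph) (k : ℕ) : Prop :=
  ∃ (v₁ : G₁.V) (v₂ : G₂.V),
    G₁.degree v₁ = k ∧ G₂.degree v₂ = k ∧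
    ∃ (σ : {e : G₁.E // v₁ ∈ G₁.ends e} ≃ {e : G₂.E // v₂ ∈ G₂.ends e})
      (fV : ({u : G₁.V // u ≠ v₁} ⊕ {u : G₂.V // u ≠ v₂}) ≃ G.V)
      (fE : ({e : G₁.E // v₁ ∉ G₁.ends e} ⊕ {e : G₂.E // v₂ ∉ G₂.ends e} ⊕
        {e : G₁.E // v₁ ∈ G₁.ends e}) ≃ G.E),
      (∀ (e : G₁.E) (he : v₁ ∉ G₁.ends e) (a b : G₁.V), G₁.ends e = s(a, b) →
        ∃ (ha : a ≠ v₁) (hb : b ≠ v₁),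
          G.ends (fE (Sum.inl ⟨e, he⟩)) = s(fV (Sum.inl ⟨a, ha⟩), fV (Sum.inl ⟨b, hb⟩))) ∧
      (∀ (e : G₂.E) (he : v₂ ∉ G₂.ends e) (a b : G₂.V), G₂.ends e = s(a, b) →
        ∃ (ha : a ≠ v₂) (hb : b ≠ v₂),
          G.ends (fE (Sum.inr (Sum.inl ⟨e, he⟩))) =
            s(fV (Sum.inr ⟨a, ha⟩), fV (Sum.inr ⟨b, hb⟩))) ∧
      ∀ (e : {e : G₁.E // v₁ ∈ G₁.ends e}) (a : G₁.V) (b : G₂.V),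
        G₁.ends e.1 = s(v₁, a) → G₂.ends (σ e).1 = s(v₂, b) →
        ∃ (ha : a ≠ v₁) (hb : b ≠ v₂),
          G.ends (fE (Sum.inr (Sum.inr e))) =
            s(fV (Sum.inl ⟨a, ha⟩), fV (Sum.inr ⟨b, hb⟩))

/-- `G` can be constructed by applying consecutive `i`-edge-sums, for `i ≤ 3`,
starting from graphs satisfying the predicate `base`. -/
inductive ConstructibleFrom (base : Multigraph → Prop) : Multigraph → Prop where
  | base (G : Multigraph) : base G → ConstructibleFrom base G
  | edgeSum (G G₁ G₂ : Multigraph) (k : ℕ) (hk : k ≤ 3) :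
      ConstructibleFrom base G₁ → ConstructibleFrom base G₂ →
      IsEdgeSum G G₁ G₂ k → ConstructibleFrom base G

end Multigraph

namespace Multigraph

variable {G : Multigraph}

noncomputable instance instFintypeV (G : Multigraph) : Fintype G.V := Fintype.ofFinite _
noncomputable instance instFintypeE (G : Multigraph) : Fintype G.E := Fintype.ofFinite _

lemma exists_ends (G : Multigraph) (e : G.E) : ∃ p : G.V × G.V, G.ends e = s(p.1, p.2) := by
  induction G.ends e using Sym2.ind with
  | _ a b => exact ⟨(a, b), rfl⟩

/-- Chosen first endpoint of an edge. -/
def efst (G : Multigraph) (e : G.E) : G.V := (exists_ends G e).choose.1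
/-- Chosen second endpoint of an edge. -/
def esnd (G : Multigraph) (e : G.E) : G.V := (exists_ends G e).choose.2

lemma ends_eq (G : Multigraph) (e : G.E) : G.ends e = s(G.efst e, G.esnd e) :=
  (exists_ends G e).choose_spec

lemma efst_ne_esnd (G : Multigraph) (e : G.E) : G.efst e ≠ G.esnd e := by
  intro h
  exact G.loopless e (by rw [G.ends_eq e]; exact Sym2.mk_isDiag_iff.mpr h)

lemma mem_ends_iff {e : G.E} {x : G.V} : x ∈ G.ends e ↔ x = G.efst e ∨ x = G.esnd e := by
  rw [G.ends_eq e]; exact Sym2.mem_iff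

lemma ends_cases {e : G.E} {x y : G.V} (h : G.ends e = s(x, y)) :
    (G.efst e = x ∧ G.esnd e = y) ∨ (G.efst e = y ∧ G.esnd e = x) := by
  rw [G.ends_eq e] at h
  rw [Sym2.eq_iff] at h
  tauto

lemma ne_of_ends_eq {e : G.E} {x y : G.V} (h : G.ends e = s(x, y)) : x ≠ y := by
  intro hxy; subst hxy
  exact G.loopless e (by rw [h]; exact Sym2.mk_isDiag_iff.mpr rfl)

/-- Signed incidence of vertex `x` with edge `e`. -/
def sg (G : Multigraph) (e : G.E) (x : G.V) : ℤ :=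
  (if G.efst e = x then 1 else 0) - (if G.esnd e = x then 1 else 0)

lemma sg_eq_zero {e : G.E} {x : G.V} (h : x ∉ G.ends e) : G.sg e x = 0 := by
  rw [mem_ends_iff] at h
  push_neg at h
  simp [sg, (Ne.symm h.1), (Ne.symm h.2)]

lemma sg_cases {e : G.E} {x : G.V} (h : x ∈ G.ends e) : G.sg e x = 1 ∨ G.sg e x = -1 := by
  rcases mem_ends_iff.mp h with h1 | h1 <;> subst h1
  · left; simp [sg, (G.efst_ne_esnd e).symm]
  · right; simp [sg, G.efst_ne_esnd e]

lemma sg_other {e : G.E} {x y : G.V} (h : G.ends e = s(x, y)) : G.sg e y = - G.sg e x := by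
  rcases ends_cases h with ⟨h1, h2⟩ | ⟨h1, h2⟩ <;> subst h1 <;> subst h2 <;>
    simp [sg, G.efst_ne_esnd e, (G.efst_ne_esnd e).symm]

lemma mem_ends_left {e : G.E} {x y : G.V} (h : G.ends e = s(x, y)) : x ∈ G.ends e := by
  rw [h]; exact Sym2.mem_mk_left x y

lemma mem_ends_right {e : G.E} {x y : G.V} (h : G.ends e = s(x, y)) : y ∈ G.ends e := by
  rw [h]; exact Sym2.mem_mk_right x y

lemma sg_mul_self {e : G.E} {x : G.V} (h : x ∈ G.ends e) : G.sg e x * G.sg e x = 1 := by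
  rcases sg_cases h with h1 | h1 <;> rw [h1] <;> ring

lemma sg_spec {e : G.E} {x y : G.V} (h : G.ends e = s(x, y)) (u : G.V) :
    G.sg e u * G.sg e x = (if u = x then 1 else 0) - (if u = y then 1 else 0) := by
  have hxy : x ≠ y := ne_of_ends_eq h
  by_cases hux : u = x
  · subst hux
    rw [if_pos rfl, if_neg hxy, sg_mul_self (mem_ends_left h)]; ring
  · by_cases huy : u = y
    · subst huy
      rw [if_neg hux, if_pos rfl, sg_other h, neg_mul, sg_mul_self (mem_ends_left h)]
      ring
    · have : u ∉ G.ends e := by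
        rw [h, Sym2.mem_iff]; push_neg; exact ⟨hux, huy⟩
      rw [sg_eq_zero this, if_neg hux, if_neg huy, zero_mul]
      ring

/-- Divergence (net outflow) of `f` at vertex `x`. -/
def dvg (G : Multigraph) (f : G.E → ℤ) (x : G.V) : ℤ := ∑ e : G.E, G.sg e x * f e

lemma dvg_update (f : G.E → ℤ) (e : G.E) (c : ℤ) (u : G.V) :
    G.dvg (Function.update f e c) u = G.dvg f u + G.sg e u * (c - f e) := by
  unfold dvg
  rw [← Finset.sum_erase_add _ _ (Finset.mem_univ e),
      ← Finset.sum_erase_add _ (fun e' => G.sg e' u * f e') (Finset.mem_univ e)]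
  have : ∀ e' ∈ Finset.univ.erase e,
      G.sg e' u * Function.update f e c e' = G.sg e' u * f e' := by
    intro e' he'
    rw [Function.update_of_ne (Finset.ne_of_mem_erase he')]
  rw [Finset.sum_congr rfl this, Function.update_self]
  ring

lemma sum_dvg_subset (f : G.E → ℤ) (s : Finset G.V) :
    ∑ u ∈ s, G.dvg f u =
      ∑ e : G.E, ((if G.efst e ∈ s then 1 else 0) - (if G.esnd e ∈ s then 1 else 0)) * f e := by
  unfold dvg
  rw [Finset.sum_comm]
  refine Finset.sum_congr rfl fun e _ => ?_
  rw [← Finset.sum_mul]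
  congr 1
  unfold sg
  rw [Finset.sum_sub_distrib]
  congr 1 <;> simp [Finset.sum_ite_eq]

lemma sum_dvg_univ (f : G.E → ℤ) : ∑ u : G.V, G.dvg f u = 0 := by
  rw [sum_dvg_subset]
  simp
namespace Walk

/-- Darts of a walk: edges together with the vertex they are traversed from. -/
def darts : ∀ {a b : G.V}, G.Walk a b → List (G.E × G.V)
  | _, _, nil => []
  | a, _, cons e _ t => (e, a) :: t.darts

@[simp] lemma darts_nil {a : G.V} : (nil : G.Walk a a).darts = [] := rfl
@[simp] lemma darts_cons {a c b : G.V} (e : G.E) (h : G.ends e = s(a, c)) (t : G.Walk c b) :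
    (cons e h t).darts = (e, a) :: t.darts := rfl
@[simp] lemma edges_nil {a : G.V} : (nil : G.Walk a a).edges = [] := rfl
@[simp] lemma edges_cons {a c b : G.V} (e : G.E) (h : G.ends e = s(a, c)) (t : G.Walk c b) :
    (cons e h t).edges = e :: t.edges := rfl
@[simp] lemma support_nil {a : G.V} : (nil : G.Walk a a).support = [a] := rfl
@[simp] lemma support_cons {a c b : G.V} (e : G.E) (h : G.ends e = s(a, c)) (t : G.Walk c b) :
    (cons e h t).support = a :: t.support := rfl

lemma edges_eq_darts_map : ∀ {a b : G.V} (W : G.Walk a b), W.edges = W.darts.map Prod.fst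
  | _, _, nil => rfl
  | _, _, cons e h t => by simp [edges_eq_darts_map t]

lemma start_mem_support : ∀ {a b : G.V} (W : G.Walk a b), a ∈ W.support
  | _, _, nil => List.mem_singleton.mpr rfl
  | _, _, cons _ _ _ => List.mem_cons_self

lemma end_mem_support : ∀ {a b : G.V} (W : G.Walk a b), b ∈ W.support
  | _, _, nil => List.mem_singleton.mpr rfl
  | _, _, cons _ _ t => List.mem_cons_of_mem _ (end_mem_support t)

lemma mem_support_of_mem_ends : ∀ {a b : G.V} (W : G.Walk a b) {e : G.E} {x : G.V},
    e ∈ W.edges → x ∈ G.ends e → x ∈ W.support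
  | _, _, nil, e, x => by intro h; simp at h
  | a, b, cons e' h' t, e, x => by
    intro he hx
    rcases List.mem_cons.mp he with rfl | he
    · rw [h', Sym2.mem_iff] at hx
      rcases hx with rfl | rfl
      · exact List.mem_cons_self
      · exact List.mem_cons_of_mem _ (start_mem_support t)
    · exact List.mem_cons_of_mem _ (mem_support_of_mem_ends t he hx)

lemma edges_nodup_of_isPath : ∀ {a b : G.V} (W : G.Walk a b), W.IsPath → W.edges.Nodup
  | _, _, nil => fun _ => List.nodup_nil
  | a, b, cons e h t => by
    intro hp
    rw [IsPath, support_cons, List.nodup_cons] at hp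
    rw [edges_cons, List.nodup_cons]
    refine ⟨fun he => hp.1 ?_, edges_nodup_of_isPath t hp.2⟩
    exact mem_support_of_mem_ends t he (mem_ends_left h)

@[simp] lemma edges_append : ∀ {a b c : G.V} (p : G.Walk a b) (q : G.Walk b c),
    (p.append q).edges = p.edges ++ q.edges
  | _, _, _, nil, q => rfl
  | _, _, _, cons e h t, q => by
    show (cons e h (t.append q)).edges = _
    simp [edges_append t q]

@[simp] lemma darts_append : ∀ {a b c : G.V} (p : G.Walk a b) (q : G.Walk b c),
    (p.append q).darts = p.darts ++ q.darts
  | _, _, _, nil, q => rfl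
  | _, _, _, cons e h t, q => by
    show (cons e h (t.append q)).darts = _
    simp [darts_append t q]

lemma mem_edges_reverse : ∀ {a b : G.V} (W : G.Walk a b) {e : G.E},
    e ∈ W.reverse.edges → e ∈ W.edges
  | _, _, nil, e => by intro h; exact h
  | _, _, cons e' h t, e => by
    intro hr
    simp only [Walk.reverse, edges_append] at hr
    rcases List.mem_append.mp hr with h | h
    · exact List.mem_cons_of_mem _ (mem_edges_reverse t h)
    · simp only [edges_cons, edges_nil] at h
      rw [List.mem_singleton] at h
      subst h
      exact List.mem_cons_self

/-- Transport a walk along an equality of its endpoint. -/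
def castEnd {a b b' : G.V} (h : b = b') (W : G.Walk a b) : G.Walk a b' := h ▸ W

@[simp] lemma castEnd_edges {a b b' : G.V} (h : b = b') (W : G.Walk a b) :
    (castEnd h W).edges = W.edges := by subst h; rfl

@[simp] lemma castEnd_isPath {a b b' : G.V} (h : b = b') (W : G.Walk a b) :
    (castEnd h W).IsPath ↔ W.IsPath := by subst h; rfl

lemma exists_dropTo : ∀ {a b : G.V} (W : G.Walk a b) (c : G.V), c ∈ W.support →
    ∃ W' : G.Walk c b, W'.support.Sublist W.support ∧ ∀ d ∈ W'.darts, d ∈ W.darts := by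
  intro a b W
  induction W with
  | nil =>
    intro c hc
    rw [support_nil, List.mem_singleton] at hc
    subst hc
    exact ⟨nil, List.Sublist.refl _, fun d hd => hd⟩
  | @cons u x w e h t ih =>
    intro c hc
    by_cases hcu : c = u
    · subst hcu
      exact ⟨cons e h t, List.Sublist.refl _, fun d hd => hd⟩
    · rw [support_cons, List.mem_cons] at hc
      rcases hc with rfl | hc
      · exact absurd rfl hcu
      · obtain ⟨W', h1, h2⟩ := ih c hc
        exact ⟨W', h1.trans (List.sublist_cons_self _ _),
          fun d hd => List.mem_cons_of_mem _ (h2 d hd)⟩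

lemma exists_bypass : ∀ {a b : G.V} (W : G.Walk a b),
    ∃ W' : G.Walk a b, W'.IsPath ∧ ∀ d ∈ W'.darts, d ∈ W.darts := by
  intro a b W
  induction W with
  | nil => exact ⟨nil, List.nodup_singleton _, fun d hd => hd⟩
  | @cons u x w e h t ih =>
    obtain ⟨W', hp, hd⟩ := ih
    by_cases hu : u ∈ W'.support
    · obtain ⟨W'', h1, h2⟩ := exists_dropTo W' u hu
      exact ⟨W'', h1.nodup hp, fun d hdd =>
        List.mem_cons_of_mem _ (hd d (h2 d hdd))⟩
    · refine ⟨cons e h W', ?_, ?_⟩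
      · rw [IsPath, support_cons, List.nodup_cons]
        exact ⟨hu, hp⟩
      · intro d hdd
        rcases List.mem_cons.mp hdd with rfl | hdd
        · exact List.mem_cons_self
        · exact List.mem_cons_of_mem _ (hd d hdd)

lemma mem_edges_of_mem_darts {a b : G.V} {W : G.Walk a b} {d : G.E × G.V}
    (h : d ∈ W.darts) : d.1 ∈ W.edges := by
  rw [edges_eq_darts_map]
  exact List.mem_map_of_mem h

lemma dart_fst_mem_ends : ∀ {a b : G.V} (W : G.Walk a b) {d : G.E × G.V},
    d ∈ W.darts → d.2 ∈ G.ends d.1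
  | _, _, nil, d => by intro h; simp at h
  | a, b, cons e h t, d => by
    intro hd
    rcases List.mem_cons.mp hd with rfl | hd
    · exact mem_ends_left h
    · exact dart_fst_mem_ends t hd

end Walk
/-- One can push a unit of flow along edge `e` away from vertex `x`. -/
def Pushable (G : Multigraph) (f : G.E → ℤ) (e : G.E) (x : G.V) : Prop := G.sg e x * f e ≤ 0

/-- All darts of the walk are pushable with respect to `f`. -/
def WFlow (G : Multigraph) (f : G.E → ℤ) {a b : G.V} (W : G.Walk a b) : Prop :=
  ∀ d ∈ W.darts, G.Pushable f d.1 d.2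

/-- The result of pushing one unit of flow along each dart of a walk, in order. -/
def pushW (G : Multigraph) (f : G.E → ℤ) : ∀ {a b : G.V}, G.Walk a b → (G.E → ℤ)
  | _, _, .nil => f
  | a, _, .cons e _ t => G.pushW (Function.update f e (f e + G.sg e a)) t

lemma dvg_pushW (f : G.E → ℤ) : ∀ {a b : G.V} (W : G.Walk a b) (u : G.V),
    G.dvg (G.pushW f W) u =
      G.dvg f u + (if u = a then 1 else 0) - (if u = b then 1 else 0) := by
  intro a b W
  induction W generalizing f with
  | nil => intro u; simp [pushW]
  | @cons a c b e h t ih =>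
    intro u
    show G.dvg (G.pushW (Function.update f e (f e + G.sg e a)) t) u = _
    rw [ih, dvg_update]
    have : f e + G.sg e a - f e = G.sg e a := by ring
    rw [this, sg_spec h u]
    ring

lemma pushW_eq_of_not_mem (f : G.E → ℤ) : ∀ {a b : G.V} (W : G.Walk a b) (e' : G.E),
    e' ∉ W.edges → G.pushW f W e' = f e' := by
  intro a b W
  induction W generalizing f with
  | nil => intro e' _; rfl
  | @cons a c b e h t ih =>
    intro e' he'
    rw [Walk.edges_cons, List.mem_cons] at he'
    push_neg at he'
    show G.pushW (Function.update f e (f e + G.sg e a)) t e' = f e'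
    rw [ih _ e' he'.2, Function.update_of_ne he'.1]

lemma pushW_bound (f : G.E → ℤ) : ∀ {a b : G.V} (W : G.Walk a b),
    W.edges.Nodup → G.WFlow f W → (∀ e, |f e| ≤ 1) → ∀ e, |G.pushW f W e| ≤ 1 := by
  intro a b W
  induction W generalizing f with
  | nil => intro _ _ hb e; exact hb e
  | @cons a c b e h t ih =>
    intro hnd hwf hb e'
    rw [Walk.edges_cons, List.nodup_cons] at hnd
    have hpush : G.sg e a * f e ≤ 0 := hwf (e, a) (List.mem_cons_self)
    have hsg : G.sg e a = 1 ∨ G.sg e a = -1 := sg_cases (mem_ends_left h)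
    have hb1 : ∀ e'', |Function.update f e (f e + G.sg e a) e''| ≤ 1 := by
      intro e''
      by_cases he'' : e'' = e
      · subst he''
        rw [Function.update_self]
        have h2 := hb e''
        rw [abs_le] at h2 ⊢
        rcases hsg with h1 | h1 <;> rw [h1] at hpush ⊢ <;> constructor <;> omega
      · rw [Function.update_of_ne he'']; exact hb e''
    have hwf1 : G.WFlow (Function.update f e (f e + G.sg e a)) t := by
      intro d hd
      have : d.1 ≠ e := by
        intro hde
        exact hnd.1 (hde ▸ Walk.mem_edges_of_mem_darts hd)
      unfold Pushable
      rw [Function.update_of_ne this]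
      exact hwf d (List.mem_cons_of_mem _ hd)
    exact ih _ hnd.2 hwf1 hb1 e'

/-- Extraction of a single unit flow path from `v` towards a deficient vertex. -/
lemma extract : ∀ (n : ℕ) (g : G.E → ℤ),
    (Finset.univ.filter (fun e => g e ≠ 0)).card ≤ n →
    (∀ e, |g e| ≤ 1) → ∀ u : G.V, 1 ≤ G.dvg g u →
    ∃ (z : G.V) (W : G.Walk u z) (g' : G.E → ℤ),
      G.dvg g z ≤ -1 ∧ (∀ e, |g' e| ≤ 1) ∧
      (∀ e ∈ W.edges, g' e = 0 ∧ g e ≠ 0) ∧ (∀ e, e ∉ W.edges → g' e = g e) ∧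
      G.dvg g' u = G.dvg g u - 1 ∧ G.dvg g' z = G.dvg g z + 1 ∧
      (∀ x, x ≠ u → x ≠ z → G.dvg g' x = G.dvg g x) ∧ u ≠ z := by
  intro n
  induction n with
  | zero =>
    intro g hcard _ u hu
    have : ∀ e, g e = 0 := by
      intro e
      by_contra he
      have : e ∈ Finset.univ.filter (fun e => g e ≠ 0) := by
        simp [he]
      have := Finset.card_pos.mpr ⟨e, this⟩
      omega
    have : G.dvg g u = 0 := by
      unfold dvg
      refine Finset.sum_eq_zero fun e _ => ?_
      rw [this e, mul_zero]
    omega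
  | succ n ih =>
    intro g hcard hb u hu
    -- find an edge with outflow at u
    have hex : ∃ e, 1 ≤ G.sg e u * g e := by
      by_contra hno
      push_neg at hno
      have : G.dvg g u ≤ 0 := by
        unfold dvg
        refine Finset.sum_nonpos fun e _ => ?_
        have := hno e
        omega
      omega
    obtain ⟨e, he⟩ := hex
    have hgne : g e ≠ 0 := by
      intro h0; rw [h0, mul_zero] at he; omega
    have hsgne : G.sg e u ≠ 0 := by
      intro h0; rw [h0, zero_mul] at he; omega
    have hu_mem : u ∈ G.ends e := by
      by_contra hmem
      exact hsgne (sg_eq_zero hmem)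
    have hsgu : G.sg e u * g e = 1 := by
      have h1 := hb e
      rw [abs_le] at h1
      rcases sg_cases hu_mem with h2 | h2 <;> rw [h2] at he ⊢ <;> omega
    -- the other endpoint
    obtain ⟨c, hc⟩ : ∃ c, G.ends e = s(u, c) := by
      rcases mem_ends_iff.mp hu_mem with h1 | h1
      · exact ⟨G.esnd e, by rw [G.ends_eq e, h1]⟩
      · exact ⟨G.efst e, by rw [G.ends_eq e, h1, Sym2.eq_swap]⟩
    have huc : u ≠ c := ne_of_ends_eq hc
    set g₁ := Function.update g e 0 with hg₁
    have hd₁ : ∀ x, G.dvg g₁ x = G.dvg g x - G.sg e x * g e := by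
      intro x; rw [hg₁, dvg_update]; ring
    have hdu : G.dvg g₁ u = G.dvg g u - 1 := by rw [hd₁, hsgu]
    have hsgc : G.sg e c * g e = -1 := by
      rw [sg_other hc, neg_mul, hsgu]
    have hdc : G.dvg g₁ c = G.dvg g c + 1 := by rw [hd₁, hsgc]; ring
    have hdother : ∀ x, x ≠ u → x ≠ c → G.dvg g₁ x = G.dvg g x := by
      intro x hx1 hx2
      rw [hd₁, sg_eq_zero (by rw [hc, Sym2.mem_iff]; push_neg; exact ⟨hx1, hx2⟩), zero_mul,
        sub_zero]
    have hb₁ : ∀ e', |g₁ e'| ≤ 1 := by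
      intro e'
      by_cases he' : e' = e
      · subst he'; rw [hg₁, Function.update_self]; norm_num
      · rw [hg₁, Function.update_of_ne he']; exact hb e'
    have hcard₁ : (Finset.univ.filter (fun e' => g₁ e' ≠ 0)).card ≤ n := by
      have hsub : Finset.univ.filter (fun e' => g₁ e' ≠ 0) ⊆
          (Finset.univ.filter (fun e' => g e' ≠ 0)).erase e := by
        intro e' he'
        rw [Finset.mem_filter] at he'
        rw [Finset.mem_erase, Finset.mem_filter]
        have hne : e' ≠ e := by
          intro hh; subst hh
          rw [hg₁, Function.update_self] at he'
          exact he'.2 rfl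
        refine ⟨hne, Finset.mem_univ _, ?_⟩
        rw [hg₁, Function.update_of_ne hne] at he'
        exact he'.2
      have h1 := Finset.card_le_card hsub
      have h2 : e ∈ Finset.univ.filter (fun e' => g e' ≠ 0) := by simp [hgne]
      have h3 := Finset.card_erase_of_mem h2
      omega
    by_cases hcneg : G.dvg g c ≤ -1
    · -- single edge suffices
      refine ⟨c, Walk.cons e hc Walk.nil, g₁, hcneg, hb₁, ?_, ?_, hdu, hdc, ?_, huc⟩
      · intro e' he'
        simp only [Walk.edges_cons, Walk.edges_nil, List.mem_singleton] at he'
        subst he'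
        exact ⟨by rw [hg₁, Function.update_self], hgne⟩
      · intro e' he'
        simp only [Walk.edges_cons, Walk.edges_nil, List.mem_singleton] at he'
        rw [hg₁, Function.update_of_ne he']
      · exact hdother
    · push_neg at hcneg
      have hdc1 : 1 ≤ G.dvg g₁ c := by omega
      obtain ⟨z, W', g', hz, hb', hedges, hnot, hdu', hdz', hother', hcz⟩ :=
        ih g₁ hcard₁ hb₁ c hdc1
      have hzu : z ≠ u := by
        intro hh; subst hh
        have := hother'  -- dvg g' values
        have h1 : G.dvg g₁ z ≤ -1 := by
          have := hdz'
          -- dvg g' z = dvg g₁ z + 1 and dvg g' z... we need dvg g₁ z ≤ -1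
          -- from hz : dvg g₁ z ≤ -1
          exact hz
        rw [hdu] at h1
        omega
      have hzc : z ≠ c := Ne.symm hcz
      refine ⟨z, Walk.cons e hc W', g', ?_, hb', ?_, ?_, ?_, ?_, ?_, Ne.symm hzu⟩
      · -- dvg g z ≤ -1
        rw [← hdother z hzu hzc]; exact hz
      · intro e' he'
        rw [Walk.edges_cons, List.mem_cons] at he'
        rcases he' with rfl | he'
        · have h1 : e' ∉ W'.edges := by
            intro hh
            have := (hedges e' hh).2
            rw [hg₁, Function.update_self] at this
            exact this rfl
          exact ⟨by rw [hnot e' h1, hg₁, Function.update_self], hgne⟩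
        · obtain ⟨h1, h2⟩ := hedges e' he'
          refine ⟨h1, ?_⟩
          have hne : e' ≠ e := by
            intro hh; subst hh
            rw [hg₁, Function.update_self] at h2; exact h2 rfl
          rw [hg₁, Function.update_of_ne hne] at h2
          exact h2
      · intro e' he'
        rw [Walk.edges_cons, List.mem_cons] at he'
        push_neg at he'
        rw [hnot e' he'.2, hg₁, Function.update_of_ne he'.1]
      · -- dvg g' u = dvg g u - 1
        rw [hother' u huc (Ne.symm hzu)]
        exact hdu
      · -- dvg g' z = dvg g z + 1
        rw [hdz', ← hdother z hzu hzc]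
      · intro x hx1 hx2
        by_cases hxc : x = c
        · subst hxc
          rw [hdu', hdc]; ring
        · rw [hother' x hxc hx2, hdother x hx1 hxc]
section Cuts

variable {F₀ : Set G.E}

lemma walk_mem_iff_of_avoid {P : Set G.V}
    (hP : ∀ e : G.E, e ∉ F₀ → (G.efst e ∈ P ↔ G.esnd e ∈ P)) :
    ∀ {a b : G.V} (W : G.Walk a b), (∀ e ∈ W.edges, e ∉ F₀) → (a ∈ P ↔ b ∈ P) := by
  intro a b W
  induction W with
  | nil => intro _; rfl
  | @cons a c b e h t ih =>
    intro hav
    have he : e ∉ F₀ := hav e (List.mem_cons_self)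
    have h1 : (a ∈ P) ↔ (c ∈ P) := by
      rcases ends_cases h with ⟨h1, h2⟩ | ⟨h1, h2⟩ <;> rw [← h1, ← h2]
      · exact hP e he
      · exact (hP e he).symm
    exact h1.trans (ih fun e' he' => hav e' (List.mem_cons_of_mem _ he'))

lemma exists_crossing {P : Set G.V} :
    ∀ {a b : G.V} (W : G.Walk a b), a ∈ P → b ∉ P →
    ∃ (e : G.E) (x y : G.V), G.ends e = s(x, y) ∧ x ∈ P ∧ y ∉ P := by
  intro a b W
  induction W with
  | nil => intro h1 h2; exact absurd h1 h2
  | @cons a c b e h t ih =>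
    intro h1 h2
    by_cases hc : c ∈ P
    · exact ih hc h2
    · exact ⟨e, a, c, h, h1, hc⟩

/-- Converting a walk in `G.deleteEdges F₀` to a walk in `G`. -/
def ofDel : ∀ {a b : G.V}, (G.deleteEdges F₀).Walk a b → G.Walk a b
  | _, _, .nil => .nil
  | _, _, .cons e h t => .cons e.1 h (ofDel t)

lemma ofDel_edges : ∀ {a b : G.V} (W : (G.deleteEdges F₀).Walk a b),
    ∀ e ∈ (ofDel W).edges, e ∉ F₀
  | _, _, .nil => by intro e he; simp [ofDel, Walk.edges] at he
  | _, _, .cons e' h t => by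
    intro e he
    rcases List.mem_cons.mp he with rfl | he
    · exact e'.2
    · exact ofDel_edges t e he

lemma toDel : ∀ {a b : G.V} (W : G.Walk a b), (∀ e ∈ W.edges, e ∉ F₀) →
    Nonempty ((G.deleteEdges F₀).Walk a b) := by
  intro a b W
  induction W with
  | nil => intro _; exact ⟨.nil⟩
  | @cons a c b e h t ih =>
    intro hav
    obtain ⟨t'⟩ := ih fun e' he' => hav e' (List.mem_cons_of_mem _ he')
    exact ⟨.cons ⟨e, hav e (List.mem_cons_self)⟩ h t'⟩

lemma reachable_del_iff {a b : G.V} :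
    (G.deleteEdges F₀).Reachable a b ↔ ∃ W : G.Walk a b, ∀ e ∈ W.edges, e ∉ F₀ := by
  constructor
  · rintro ⟨W⟩
    exact ⟨ofDel W, ofDel_edges W⟩
  · rintro ⟨W, hW⟩
    exact toDel W hW

lemma numComponents_eq_one (h : G.Connected) (hne : Nonempty G.V) : G.numComponents = 1 := by
  rw [numComponents, Nat.card_eq_one_iff_unique]
  constructor
  · constructor
    intro x y
    induction x using Quotient.ind
    induction y using Quotient.ind
    exact Quotient.sound (h _ _)
  · exact ⟨⟦hne.some⟧⟩

lemma one_le_degree (hconn : G.Connected) {x y : G.V} (hxy : x ≠ y) : 1 ≤ G.degree x := by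
  obtain ⟨W⟩ := hconn x y
  cases W with
  | nil => exact absurd rfl hxy
  | cons e h t =>
    rw [degree]
    have : Nonempty {e' : G.E // x ∈ G.ends e'} := ⟨⟨e, mem_ends_left h⟩⟩
    exact Nat.one_le_iff_ne_zero.mpr (Nat.card_ne_zero.mpr ⟨this, inferInstance⟩)

lemma degree_eq_card (x : G.V) :
    (G.degree x : ℤ) = ∑ e : G.E, (if x ∈ G.ends e then (1 : ℤ) else 0) := by
  rw [degree, Nat.card_eq_fintype_card, Fintype.card_subtype]
  push_cast
  rw [Finset.card_filter]
  push_cast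
  rfl

end Cuts
lemma exists_other {e : G.E} {x : G.V} (h : x ∈ G.ends e) : ∃ y, G.ends e = s(x, y) := by
  rcases mem_ends_iff.mp h with h1 | h1
  · exact ⟨G.esnd e, by rw [G.ends_eq e, h1]⟩
  · exact ⟨G.efst e, by rw [G.ends_eq e, h1, Sym2.eq_swap]⟩

/-- The set of edges crossing the boundary of a vertex set `P`. -/
def crossSet (G : Multigraph) (P : Set G.V) : Set G.E :=
  {e | ¬ (G.efst e ∈ P ↔ G.esnd e ∈ P)}

lemma crossSet_iff {P : Set G.V} {e : G.E} {x y : G.V} (h : G.ends e = s(x, y)) :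
    e ∈ G.crossSet P ↔ ¬ (x ∈ P ↔ y ∈ P) := by
  rcases ends_cases h with ⟨h1, h2⟩ | ⟨h1, h2⟩ <;> rw [crossSet, Set.mem_setOf_eq, h1, h2] <;>
    tauto

lemma not_crossSet {P : Set G.V} {e : G.E} (he : e ∉ G.crossSet P) :
    (G.efst e ∈ P ↔ G.esnd e ∈ P) := not_not.mp he

lemma WFlow_nil {f : G.E → ℤ} {a : G.V} : G.WFlow f (Walk.nil : G.Walk a a) := by
  intro d hd; simp at hd

lemma WFlow_append {f : G.E → ℤ} {a b c : G.V} {p : G.Walk a b} {q : G.Walk b c}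
    (hp : G.WFlow f p) (hq : G.WFlow f q) : G.WFlow f (p.append q) := by
  intro d hd
  rw [Walk.darts_append, List.mem_append] at hd
  rcases hd with hd | hd
  · exact hp d hd
  · exact hq d hd

lemma WFlow_single {f : G.E → ℤ} {a b : G.V} {e : G.E} (h : G.ends e = s(a, b))
    (hp : G.Pushable f e a) : G.WFlow f (Walk.cons e h Walk.nil) := by
  intro d hd
  simp only [Walk.darts_cons, Walk.darts_nil, List.mem_singleton] at hd
  subst hd
  exact hp

/-- Every vertex on a flow-respecting walk starting from a flow-reachable vertex is
flow-reachable. -/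
lemma support_flow_reachable {f : G.E → ℤ} {v : G.V} :
    ∀ {a b : G.V} (W : G.Walk a b), G.WFlow f W →
      (∃ Wv : G.Walk v a, G.WFlow f Wv) →
      ∀ y ∈ W.support, ∃ Wy : G.Walk v y, G.WFlow f Wy := by
  intro a b W
  induction W with
  | nil =>
    intro _ hpre y hy
    rw [Walk.support_nil, List.mem_singleton] at hy
    subst hy; exact hpre
  | @cons a c b e h t ih =>
    intro hW hpre y hy
    rw [Walk.support_cons, List.mem_cons] at hy
    rcases hy with rfl | hy
    · exact hpre
    · refine ih (fun d hd => hW d (List.mem_cons_of_mem _ hd)) ?_ y hy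
      obtain ⟨Wv, hWv⟩ := hpre
      exact ⟨Wv.append (Walk.cons e h Walk.nil),
        WFlow_append hWv (WFlow_single h (hW (e, a) (List.mem_cons_self)))⟩

lemma two_le_ncard {α : Type} [Finite α] {s : Set α} {a b : α}
    (ha : a ∈ s) (hb : b ∈ s) (hab : a ≠ b) : 2 ≤ Nat.card ↥s := by
  rw [Nat.card_coe_set_eq]
  calc 2 = ({a, b} : Set α).ncard := (Set.ncard_pair hab).symm
    _ ≤ s.ncard := Set.ncard_le_ncard
        (by intro x hx; rcases hx with rfl | hx; · exact ha
            · rw [Set.mem_singleton_iff] at hx; subst hx; exact hb)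
        (Set.toFinite s)
lemma sum_split {i : ℕ} (v : G.V) (vs : Fin i → G.V) (hinj : Function.Injective vs)
    (hv : ∀ l, vs l ≠ v) (f : G.E → ℤ)
    (hzero : ∀ x, x ≠ v → (∀ l, x ≠ vs l) → G.dvg f x = 0) :
    G.dvg f v + ∑ l : Fin i, G.dvg f (vs l) = 0 := by
  have h0 := sum_dvg_univ f
  have h1 : ∑ u : G.V, G.dvg f u
      = ∑ u ∈ insert v (Finset.image vs Finset.univ), G.dvg f u := by
    refine (Finset.sum_subset (Finset.subset_univ _) ?_).symm
    intro x _ hx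
    rw [Finset.mem_insert, Finset.mem_image] at hx
    push_neg at hx
    exact hzero x hx.1 fun l => fun hh => hx.2 l (Finset.mem_univ l) hh.symm
  rw [h1] at h0
  rw [Finset.sum_insert (by
    rw [Finset.mem_image]; push_neg; intro l _; exact hv l)] at h0
  rw [Finset.sum_image (fun a _ b _ hab => hinj hab)] at h0
  exact h0
lemma reachable_symm {H : Multigraph} {a b : H.V} (h : H.Reachable a b) : H.Reachable b a := by
  obtain ⟨W⟩ := h; exact ⟨W.reverse⟩

lemma reachable_trans {H : Multigraph} {a b c : H.V} (h1 : H.Reachable a b)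
    (h2 : H.Reachable b c) : H.Reachable a c := by
  obtain ⟨W1⟩ := h1; obtain ⟨W2⟩ := h2; exact ⟨W1.append W2⟩

lemma no_augment_false {k i j : ℕ} (hik : i ≤ k - 1) (hji : j < i) (hconn : G.Connected)
    (hnocut : ∀ F : Set G.E, Nat.card ↥F ≤ k - 1 → ¬ G.IsInternalEdgeCut F)
    (v : G.V) (vs : Fin i → G.V) (hinj : Function.Injective vs)
    (hv : ∀ l, vs l ≠ v) (hdeg : i ≤ G.degree v)
    (f : G.E → ℤ) (hb : ∀ e, |f e| ≤ 1)
    (hdv : G.dvg f v = j)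
    (htar : ∀ l, G.dvg f (vs l) = 0 ∨ G.dvg f (vs l) = -1)
    (hzero : ∀ x, x ≠ v → (∀ l, x ≠ vs l) → G.dvg f x = 0)
    (hnoaug : ∀ l, G.dvg f (vs l) = 0 → ¬ ∃ W : G.Walk v (vs l), G.WFlow f W) :
    False := by
  classical
  set S : Set G.V := {x | ∃ W : G.Walk v x, G.WFlow f W} with hS_def
  have hvS : v ∈ S := ⟨Walk.nil, WFlow_nil⟩
  have hSclosed : ∀ x ∈ S, ∀ (e : G.E) (y : G.V), G.ends e = s(x, y) →
      G.Pushable f e x → y ∈ S := by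
    rintro x ⟨W, hW⟩ e y h hp
    exact ⟨W.append (Walk.cons e h Walk.nil), WFlow_append hW (WFlow_single h hp)⟩
  have hsum := sum_split v vs hinj hv f hzero
  have hl₀ : ∃ l, G.dvg f (vs l) = 0 := by
    by_contra hno
    push_neg at hno
    have hall : ∀ l, G.dvg f (vs l) = -1 := by
      intro l; rcases htar l with h1 | h1
      · exact absurd h1 (hno l)
      · exact h1
    rw [Finset.sum_congr rfl (fun l _ => hall l)] at hsum
    simp only [Finset.sum_const, Finset.card_univ, Fintype.card_fin, nsmul_eq_mul,
      mul_neg, mul_one] at hsum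
    rw [hdv] at hsum
    omega
  obtain ⟨l₀, hl₀⟩ := hl₀
  set t := vs l₀ with ht_def
  have htv : t ≠ v := hv l₀
  have htS : t ∉ S := fun hh => hnoaug l₀ hl₀ hh
  set F : Set G.E := G.crossSet S with hF_def
  have hsat : ∀ e ∈ F, ∀ x y : G.V, G.ends e = s(x, y) → x ∈ S →
      G.sg e x * f e = 1 := by
    intro e he x y h hx
    have hy : y ∉ S := by
      intro hy
      exact (crossSet_iff h).mp he ⟨fun _ => hy, fun _ => hx⟩
    have hpush : ¬ G.Pushable f e x := fun hp => hy (hSclosed x hx e y h hp)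
    unfold Pushable at hpush
    push_neg at hpush
    have hbe := hb e
    rw [abs_le] at hbe
    rcases sg_cases (mem_ends_left h) with h1 | h1 <;> rw [h1] at hpush ⊢ <;> omega
  have hFcard : (F.toFinset.card : ℤ) ≤ (j : ℤ) := by
    have hkey : ∑ u ∈ S.toFinset, G.dvg f u = F.toFinset.card := by
      rw [sum_dvg_subset]
      have hterm : ∀ e : G.E,
          ((if G.efst e ∈ S.toFinset then (1:ℤ) else 0)
            - (if G.esnd e ∈ S.toFinset then 1 else 0)) * f e
          = if e ∈ F.toFinset then 1 else 0 := by
        intro e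
        simp only [Set.mem_toFinset]
        by_cases h1 : G.efst e ∈ S <;> by_cases h2 : G.esnd e ∈ S
        · rw [if_pos h1, if_pos h2,
            if_neg (show e ∉ F from not_not.mpr ⟨fun _ => h2, fun _ => h1⟩)]
          ring
        · have heF : e ∈ F := fun hh => h2 (hh.mp h1)
          have hh := hsat e heF (G.efst e) (G.esnd e) (G.ends_eq e) h1
          rw [sg, if_pos rfl, if_neg (fun hh2 => G.efst_ne_esnd e hh2.symm)] at hh
          rw [if_pos h1, if_neg h2, if_pos heF]
          linarith
        · have heF : e ∈ F := fun hh => h1 (hh.mpr h2)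
          have hh := hsat e heF (G.esnd e) (G.efst e)
            (by rw [G.ends_eq e]; exact Sym2.eq_swap) h2
          rw [sg, if_neg (G.efst_ne_esnd e), if_pos rfl] at hh
          rw [if_neg h1, if_pos h2, if_pos heF]
          linarith
        · rw [if_neg h1, if_neg h2,
            if_neg (show e ∉ F from not_not.mpr
              ⟨fun hh => absurd hh h1, fun hh => absurd hh h2⟩)]
          ring
      rw [Finset.sum_congr rfl fun e _ => hterm e]
      rw [Finset.sum_ite_mem, Finset.univ_inter, Finset.sum_const, nsmul_eq_mul, mul_one]
    have hvmem : v ∈ S.toFinset := Set.mem_toFinset.mpr hvS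
    rw [← Finset.add_sum_erase _ _ hvmem, hdv] at hkey
    have hrest : ∑ u ∈ S.toFinset.erase v, G.dvg f u ≤ 0 := by
      refine Finset.sum_nonpos fun u hu => ?_
      have hune : u ≠ v := (Finset.mem_erase.mp hu).1
      by_cases hut : ∃ l, u = vs l
      · obtain ⟨l, rfl⟩ := hut
        rcases htar l with h1 | h1 <;> omega
      · push_neg at hut
        rw [hzero u hune hut]
    omega
  set C : Set G.V := {x | ∃ W : G.Walk t x, ∀ e ∈ W.edges, e ∉ F} with hC_def
  have htC : t ∈ C := ⟨Walk.nil, by intro e he; simp at he⟩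
  have hCS : ∀ x ∈ C, x ∉ S := by
    rintro x ⟨W, hW⟩ hxS
    exact htS ((walk_mem_iff_of_avoid (fun e he => not_crossSet he) W hW).mpr hxS)
  have hvC : v ∉ C := fun h => hCS v h hvS
  have hCclose : ∀ x ∈ C, ∀ (e : G.E) (y : G.V), G.ends e = s(x, y) → e ∉ F → y ∈ C := by
    rintro x ⟨W, hW⟩ e y h he
    refine ⟨W.append (Walk.cons e h Walk.nil), ?_⟩
    intro e' he'
    rw [Walk.edges_append, List.mem_append] at he'
    rcases he' with he' | he'
    · exact hW e' he'
    · simp only [Walk.edges_cons, Walk.edges_nil, List.mem_singleton] at he'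
      subst he'; exact he
  have hCrev : ∀ x ∈ C, ∃ W : G.Walk x t, ∀ e ∈ W.edges, e ∉ F := by
    rintro x ⟨W, hW⟩
    exact ⟨W.reverse, fun e he => hW e (Walk.mem_edges_reverse W he)⟩
  set F' : Set G.E := G.crossSet C with hF'_def
  have hF'sub : F' ⊆ F := by
    intro e he
    by_contra heF
    exact he ⟨fun h1 => hCclose _ h1 e _ (G.ends_eq e) heF,
      fun h2 => hCclose _ h2 e _ (by rw [G.ends_eq e]; exact Sym2.eq_swap) heF⟩
  have hSreach : ∀ x ∈ S, ∃ W : G.Walk x v, ∀ e ∈ W.edges, e ∉ F' := by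
    rintro x ⟨W, hW⟩
    have hsupp : ∀ y ∈ W.support, y ∈ S := fun y hy =>
      support_flow_reachable W hW ⟨Walk.nil, WFlow_nil⟩ y hy
    have hedges : ∀ e ∈ W.edges, e ∉ F' := by
      intro e he
      have h1 : G.efst e ∈ S :=
        hsupp _ (Walk.mem_support_of_mem_ends W he (mem_ends_left (G.ends_eq e)))
      have h2 : G.esnd e ∈ S :=
        hsupp _ (Walk.mem_support_of_mem_ends W he (mem_ends_right (G.ends_eq e)))
      have heF : e ∉ F := not_not.mpr ⟨fun _ => h2, fun _ => h1⟩
      exact fun h' => heF (hF'sub h')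
    exact ⟨W.reverse, fun e he => hedges e (Walk.mem_edges_reverse W he)⟩
  have hreach : ∀ x, x ∉ C → ∃ W : G.Walk x v, ∀ e ∈ W.edges, e ∉ F' := by
    intro x hxC
    by_cases hxS : x ∈ S
    · exact hSreach x hxS
    · set C' : Set G.V := {y | ∃ W : G.Walk x y, ∀ e ∈ W.edges, e ∉ F} with hC'_def
      have hxC' : x ∈ C' := ⟨Walk.nil, by intro e he; simp at he⟩
      have hC'S : ∀ y ∈ C', y ∉ S := by
        rintro y ⟨W, hW⟩ hyS
        exact hxS ((walk_mem_iff_of_avoid (fun e he => not_crossSet he) W hW).mpr hyS)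
      have hvC' : v ∉ C' := fun h => hC'S v h hvS
      obtain ⟨Wxv⟩ := hconn x v
      obtain ⟨e₀, y, z, h₀, hyC', hzC'⟩ := exists_crossing Wxv hxC' hvC'
      have he₀F : e₀ ∈ F := by
        by_contra he₀
        obtain ⟨Wy, hWy⟩ := hyC'
        refine hzC' ⟨Wy.append (Walk.cons e₀ h₀ Walk.nil), ?_⟩
        intro e' he'
        rw [Walk.edges_append, List.mem_append] at he'
        rcases he' with he' | he'
        · exact hWy e' he'
        · simp only [Walk.edges_cons, Walk.edges_nil, List.mem_singleton] at he'
          subst he'; exact he₀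
      have hyS : y ∉ S := hC'S y hyC'
      have hzS : z ∈ S := by
        by_contra hzS
        exact (crossSet_iff h₀).mp he₀F ⟨fun hh => absurd hh hyS, fun hh => absurd hh hzS⟩
      have hyC : y ∉ C := by
        intro hyCmem
        apply hxC
        obtain ⟨Wty, hWty⟩ := hyCmem
        obtain ⟨Wxy, hWxy⟩ := hyC'
        refine ⟨Wty.append Wxy.reverse, ?_⟩
        intro e he
        rw [Walk.edges_append, List.mem_append] at he
        rcases he with he | he
        · exact hWty e he
        · exact hWxy e (Walk.mem_edges_reverse Wxy he)
      have hzC : z ∉ C := fun h => hCS z h hzS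
      have he₀F' : e₀ ∉ F' := by
        intro he'
        exact (crossSet_iff h₀).mp he' ⟨fun hh => absurd hh hyC, fun hh => absurd hh hzC⟩
      obtain ⟨Wxy, hWxy⟩ := hyC'
      obtain ⟨Wzv, hWzv⟩ := hSreach z hzS
      refine ⟨Wxy.append (Walk.cons e₀ h₀ Wzv), ?_⟩
      intro e he
      rw [Walk.edges_append, Walk.edges_cons, List.mem_append, List.mem_cons] at he
      rcases he with he | rfl | he
      · exact fun h' => hWxy e he (hF'sub h')
      · exact he₀F'
      · exact hWzv e he
  -- degenerate case 1 : C = {t}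
  by_cases hCt : ∀ x ∈ C, x = t
  · have hdegt : ∀ e : G.E, G.sg e t * f e = if t ∈ G.ends e then (-1:ℤ) else 0 := by
      intro e
      by_cases hte : t ∈ G.ends e
      · obtain ⟨y, hy⟩ := exists_other hte
        have hyt : y ≠ t := (ne_of_ends_eq hy).symm
        have hyC : y ∉ C := fun hh => hyt (hCt y hh)
        have heF' : e ∈ F' := (crossSet_iff hy).mpr fun hh => hyC (hh.mp htC)
        have heF : e ∈ F := hF'sub heF'
        have hyS : y ∈ S := by
          by_contra hyS
          exact (crossSet_iff hy).mp heF ⟨fun hh => absurd hh htS, fun hh => absurd hh hyS⟩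
        have hsat1 := hsat e heF y t (by rw [hy]; exact Sym2.eq_swap) hyS
        have h2 : G.sg e t = - G.sg e y := sg_other (by rw [hy]; exact Sym2.eq_swap)
        rw [if_pos hte, h2, neg_mul]
        linarith
      · rw [if_neg hte, sg_eq_zero hte, zero_mul]
    have hdvt : G.dvg f t = - (G.degree t : ℤ) := by
      rw [dvg, degree_eq_card, ← Finset.sum_neg_distrib]
      exact Finset.sum_congr rfl fun e _ => by
        rw [hdegt e]
        by_cases hte : t ∈ G.ends e <;> simp [hte]
    have hdeg1 : 1 ≤ G.degree t := one_le_degree hconn htv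
    rw [hl₀] at hdvt
    omega
  push_neg at hCt
  obtain ⟨x₀, hx₀C, hx₀t⟩ := hCt
  -- degenerate case 2 : complement of C = {v}
  by_cases hVC : ∀ x, x ∉ C → x = v
  · have hdegv : ∀ e : G.E, G.sg e v * f e = if v ∈ G.ends e then (1:ℤ) else 0 := by
      intro e
      by_cases hve : v ∈ G.ends e
      · obtain ⟨y, hy⟩ := exists_other hve
        have hyv : y ≠ v := (ne_of_ends_eq hy).symm
        have hyC : y ∈ C := by
          by_contra hh; exact hyv (hVC y hh)
        have heF' : e ∈ F' := (crossSet_iff hy).mpr fun hh => hvC (hh.mpr hyC)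
        have heF : e ∈ F := hF'sub heF'
        rw [if_pos hve]
        exact hsat e heF v y hy hvS
      · rw [if_neg hve, sg_eq_zero hve, zero_mul]
    have hdvv : G.dvg f v = (G.degree v : ℤ) := by
      rw [dvg, degree_eq_card]
      exact Finset.sum_congr rfl fun e _ => hdegv e
    rw [hdv] at hdvv
    have : (j : ℤ) < (i : ℤ) := by exact_mod_cast hji
    have : (i : ℤ) ≤ (G.degree v : ℤ) := by exact_mod_cast hdeg
    omega
  push_neg at hVC
  obtain ⟨x₁, hx₁C, hx₁v⟩ := hVC
  -- main case : F' is an internal edge cut of size ≤ k - 1, contradiction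
  have hcard : Nat.card ↥F' ≤ k - 1 := by
    have h1 : Nat.card ↥F' = F'.toFinset.card := by
      rw [Nat.card_coe_set_eq, Set.ncard_eq_toFinset_card']
    have h2 : F'.toFinset ⊆ F.toFinset := Set.toFinset_subset_toFinset.mpr hF'sub
    have h3 := Finset.card_le_card h2
    have h4 : F.toFinset.card ≤ j := by exact_mod_cast hFcard
    omega
  have hnc1 : G.numComponents = 1 := numComponents_eq_one hconn ⟨v⟩
  have hreachC : ∀ x ∈ C, (G.deleteEdges F').Reachable x t := by
    intro x hx
    obtain ⟨W, hW⟩ := hCrev x hx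
    exact reachable_del_iff.mpr ⟨W, fun e he h' => hW e he (hF'sub h')⟩
  have hreachV : ∀ x, x ∉ C → (G.deleteEdges F').Reachable x v := by
    intro x hx
    obtain ⟨W, hW⟩ := hreach x hx
    exact reachable_del_iff.mpr ⟨W, hW⟩
  have hntv : ¬ (G.deleteEdges F').Reachable t v := by
    intro hh
    obtain ⟨W, hW⟩ := reachable_del_iff.mp hh
    exact hvC ((walk_mem_iff_of_avoid (P := C) (fun e he => not_crossSet he) W hW).mp htC)
  have hnc2 : (G.deleteEdges F').numComponents = 2 := by
    rw [numComponents, Nat.card_eq_two_iff]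
    refine ⟨⟦t⟧, ⟦v⟧, fun hh => hntv (Quotient.exact hh), ?_⟩
    apply Set.eq_univ_of_forall
    intro q
    induction q using Quotient.ind with
    | _ x =>
      by_cases hxC : x ∈ C
      · exact Set.mem_insert_iff.mpr (Or.inl (Quotient.sound (hreachC x hxC)))
      · exact Set.mem_insert_iff.mpr (Or.inr (Set.mem_singleton_iff.mpr
          (Quotient.sound (hreachV x hxC))))
  refine hnocut F' hcard ⟨⟨⟨?_, ?_, ?_⟩, ?_⟩, ?_⟩
  · -- nonempty
    obtain ⟨Wtv⟩ := hconn t v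
    obtain ⟨e₂, a₂, b₂, h₂, ha₂, hb₂⟩ := exists_crossing Wtv htC hvC
    exact ⟨e₂, (crossSet_iff h₂).mpr fun hh => hb₂ (hh.mp ha₂)⟩
  · intro e _ e' _ u w _ _
    exact hconn u w
  · rw [hnc1, hnc2]; omega
  · rw [hnc1, hnc2]
  · intro w _
    by_cases hwC : w ∈ C
    · refine two_le_ncard (a := t) (b := x₀) ?_ ?_ (Ne.symm hx₀t)
      · exact reachable_symm (hreachC w hwC)
      · exact reachable_trans (hreachC x₀ hx₀C) (reachable_symm (hreachC w hwC))
    · refine two_le_ncard (a := v) (b := x₁) ?_ ?_ (Ne.symm hx₁v)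
      · exact reachable_symm (hreachV w hwC)
      · exact reachable_trans (hreachV x₁ hx₁C) (reachable_symm (hreachV w hwC))
lemma augment {k i j : ℕ} (hik : i ≤ k - 1) (hji : j < i) (hconn : G.Connected)
    (hnocut : ∀ F : Set G.E, Nat.card ↥F ≤ k - 1 → ¬ G.IsInternalEdgeCut F)
    (v : G.V) (vs : Fin i → G.V) (hinj : Function.Injective vs)
    (hv : ∀ l, vs l ≠ v) (hdeg : i ≤ G.degree v)
    (f : G.E → ℤ) (hb : ∀ e, |f e| ≤ 1)
    (hdv : G.dvg f v = j)
    (htar : ∀ l, G.dvg f (vs l) = 0 ∨ G.dvg f (vs l) = -1)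
    (hzero : ∀ x, x ≠ v → (∀ l, x ≠ vs l) → G.dvg f x = 0) :
    ∃ f' : G.E → ℤ, (∀ e, |f' e| ≤ 1) ∧ G.dvg f' v = (j : ℤ) + 1 ∧
      (∀ l, G.dvg f' (vs l) = 0 ∨ G.dvg f' (vs l) = -1) ∧
      (∀ x, x ≠ v → (∀ l, x ≠ vs l) → G.dvg f' x = 0) := by
  by_cases hA : ∃ l, G.dvg f (vs l) = 0 ∧ ∃ W : G.Walk v (vs l), G.WFlow f W
  · obtain ⟨l, hl0, W, hWF⟩ := hA
    obtain ⟨W', hpath, hsub⟩ := Walk.exists_bypass W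
    have hWF' : G.WFlow f W' := fun d hd => hWF d (hsub d hd)
    have hnd : W'.edges.Nodup := Walk.edges_nodup_of_isPath W' hpath
    refine ⟨G.pushW f W', pushW_bound f W' hnd hWF' hb, ?_, ?_, ?_⟩
    · rw [dvg_pushW, hdv, if_pos rfl, if_neg (fun hh : v = vs l => hv l hh.symm)]
      ring
    · intro l'
      by_cases hl' : l' = l
      · subst hl'
        right
        rw [dvg_pushW, hl0, if_neg (hv l'), if_pos rfl]
        ring
      · rw [dvg_pushW, if_neg (hv l'), if_neg (fun hh : vs l' = vs l => hl' (hinj hh))]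
        rcases htar l' with h1 | h1 <;> rw [h1] <;> [left; right] <;> ring
    · intro x hx1 hx2
      rw [dvg_pushW, if_neg hx1, if_neg (hx2 l), hzero x hx1 hx2]
      ring
  · push_neg at hA
    exact absurd (no_augment_false hik hji hconn hnocut v vs hinj hv hdeg f hb hdv htar
      hzero fun l hl hW => (hA l hl hW.choose hW.choose_spec).elim) id

lemma exists_flow {k i : ℕ} (hik : i ≤ k - 1) (hconn : G.Connected)
    (hnocut : ∀ F : Set G.E, Nat.card ↥F ≤ k - 1 → ¬ G.IsInternalEdgeCut F)
    (v : G.V) (vs : Fin i → G.V) (hinj : Function.Injective vs)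
    (hv : ∀ l, vs l ≠ v) (hdeg : i ≤ G.degree v) :
    ∃ f : G.E → ℤ, (∀ e, |f e| ≤ 1) ∧ G.dvg f v = (i : ℤ) ∧
      (∀ l, G.dvg f (vs l) = 0 ∨ G.dvg f (vs l) = -1) ∧
      (∀ x, x ≠ v → (∀ l, x ≠ vs l) → G.dvg f x = 0) := by
  suffices h : ∀ j : ℕ, j ≤ i → ∃ f : G.E → ℤ, (∀ e, |f e| ≤ 1) ∧ G.dvg f v = (j : ℤ) ∧
      (∀ l, G.dvg f (vs l) = 0 ∨ G.dvg f (vs l) = -1) ∧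
      (∀ x, x ≠ v → (∀ l, x ≠ vs l) → G.dvg f x = 0) by
    exact h i le_rfl
  intro j
  induction j with
  | zero =>
    intro _
    exact ⟨0, by norm_num, by simp [dvg], fun l => Or.inl (by simp [dvg]),
      fun x _ _ => by simp [dvg]⟩
  | succ j ih =>
    intro hji
    obtain ⟨f, hb, hdv, htar, hzero⟩ := ih (Nat.le_of_succ_le hji)
    obtain ⟨f', h1, h2, h3, h4⟩ := augment hik (by omega) hconn hnocut v vs hinj hv hdeg
      f hb hdv htar hzero
    exact ⟨f', h1, by push_cast; exact h2, h3, h4⟩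

lemma decomp {i : ℕ} (v : G.V) (vs : Fin i → G.V) (hinj : Function.Injective vs)
    (hv : ∀ l, vs l ≠ v) :
    ∀ (n : ℕ) (g : G.E → ℤ), (∀ e, |g e| ≤ 1) → G.dvg g v = (n : ℤ) →
    (∀ l, G.dvg g (vs l) = 0 ∨ G.dvg g (vs l) = -1) →
    (∀ x, x ≠ v → (∀ l, x ≠ vs l) → G.dvg g x = 0) →
    ∃ W : (l : Fin i) → G.dvg g (vs l) = -1 → G.Walk v (vs l),
      (∀ (l : Fin i) (h : G.dvg g (vs l) = -1), ∀ e ∈ (W l h).edges, g e ≠ 0) ∧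
      (∀ (l l' : Fin i) (h : G.dvg g (vs l) = -1) (h' : G.dvg g (vs l') = -1), l ≠ l' →
        ∀ e ∈ (W l h).edges, e ∉ (W l' h').edges) := by
  intro n
  induction n with
  | zero =>
    intro g hb hdv htar hzero
    have hall : ∀ l, G.dvg g (vs l) ≠ -1 := by
      intro l hl
      have hsum := sum_split v vs hinj hv g hzero
      rw [hdv] at hsum
      have h2 : ∀ l' ∈ Finset.univ, G.dvg g (vs l') ≤ (if l' = l then (-1:ℤ) else 0) := by
        intro l' _
        by_cases h : l' = l
        · subst h; rw [if_pos rfl, hl]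
        · rw [if_neg h]; rcases htar l' with h1 | h1 <;> omega
      have h3 := Finset.sum_le_sum h2
      rw [Finset.sum_ite_eq' Finset.univ l (fun _ => (-1:ℤ))] at h3
      rw [if_pos (Finset.mem_univ l)] at h3
      push_cast at hsum
      omega
    exact ⟨fun l h => absurd h (hall l), fun l h => absurd h (hall l),
      fun l l' h => absurd h (hall l)⟩
  | succ n ih =>
    intro g hb hdv htar hzero
    have hdvpos : 1 ≤ G.dvg g v := by
      rw [hdv]; push_cast; omega
    obtain ⟨z, W₀, g', hz, hb', hedges, hnot, hdu, hdz, hother, huz⟩ :=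
      extract (Finset.univ.filter (fun e => g e ≠ 0)).card g le_rfl hb v hdvpos
    have hzv : z ≠ v := Ne.symm huz
    have hzt : ∃ l, z = vs l := by
      by_contra hno
      push_neg at hno
      rw [hzero z hzv hno] at hz
      omega
    obtain ⟨l₀, rfl⟩ := hzt
    have hdzval : G.dvg g (vs l₀) = -1 := by rcases htar l₀ with h1 | h1 <;> omega
    have hdv' : G.dvg g' v = (n : ℤ) := by rw [hdu, hdv]; push_cast; ring
    have htar' : ∀ l, G.dvg g' (vs l) = 0 ∨ G.dvg g' (vs l) = -1 := by
      intro l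
      by_cases hl : l = l₀
      · subst hl; left; rw [hdz, hdzval]; ring
      · rw [hother (vs l) (hv l) (fun hh => hl (hinj hh))]; exact htar l
    have hzero' : ∀ x, x ≠ v → (∀ l, x ≠ vs l) → G.dvg g' x = 0 := by
      intro x h1 h2
      rw [hother x h1 (h2 l₀)]; exact hzero x h1 h2
    obtain ⟨W', hWg, hWdisj⟩ := ih g' hb' hdv' htar' hzero'
    have hg'edge : ∀ (l : Fin i) (hl : l ≠ l₀) (h : G.dvg g' (vs l) = -1),
        ∀ e ∈ (W' l h).edges, e ∉ W₀.edges := by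
      intro l hl h e he he₀
      exact hWg l h e he (hedges e he₀).1
    refine ⟨fun l h =>
      if hl : l = l₀ then Walk.castEnd (congrArg vs hl.symm) W₀
      else W' l (by rw [hother (vs l) (hv l) (fun hh => hl (hinj hh))]; exact h),
      ?_, ?_⟩
    · intro l h e he
      dsimp only at he
      by_cases hl : l = l₀
      · rw [dif_pos hl, Walk.castEnd_edges] at he
        exact (hedges e he).2
      · rw [dif_neg hl] at he
        have h1 := hWg l _ e he
        have h2 : e ∉ W₀.edges := fun he₀ => h1 (hedges e he₀).1
        rw [← hnot e h2]
        exact h1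
    · intro l l' h h' hll e he he'
      dsimp only at he he'
      by_cases hl : l = l₀
      · rw [dif_pos hl, Walk.castEnd_edges] at he
        have hl' : l' ≠ l₀ := fun hh => hll (hl.trans hh.symm)
        rw [dif_neg hl'] at he'
        exact hg'edge l' hl' _ e he' he
      · rw [dif_neg hl] at he
        by_cases hl' : l' = l₀
        · rw [dif_pos hl', Walk.castEnd_edges] at he'
          exact hg'edge l hl _ e he he'
        · rw [dif_neg hl'] at he'
          exact hWdisj l l' _ _ hll e he he'

theorem statement2 (k : ℕ) (hk : 1 ≤ k) (G : Multigraph) (hconn : G.Connected)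
    (hnocut : ∀ F : Set G.E, Nat.card ↥F ≤ k - 1 → ¬ G.IsInternalEdgeCut F)
    (i : ℕ) (hi : 1 ≤ i) (hik : i ≤ k - 1)
    (v : G.V) (vs : Fin i → G.V) (hinj : Function.Injective vs)
    (hv : ∀ j : Fin i, vs j ≠ v) (hdeg : i ≤ G.degree v) :
    ∃ P : (j : Fin i) → G.Walk v (vs j),
      (∀ j, (P j).IsPath) ∧ ∀ j j' : Fin i, j ≠ j' → EdgeDisjoint (P j) (P j') := by
  classical
  obtain ⟨f, hb, hdv, htar, hzero⟩ := exists_flow hik hconn hnocut v vs hinj hv hdeg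
  have hall : ∀ l, G.dvg f (vs l) = -1 := by
    have hsum := sum_split v vs hinj hv f hzero
    rw [hdv] at hsum
    by_contra hno
    push_neg at hno
    obtain ⟨l, hl⟩ := hno
    have hl0 : G.dvg f (vs l) = 0 := by
      rcases htar l with h1 | h1
      · exact h1
      · exact absurd h1 hl
    have h2 : ∀ l' ∈ Finset.univ.erase l, (-1 : ℤ) ≤ G.dvg f (vs l') := by
      intro l' _
      rcases htar l' with h1 | h1 <;> omega
    have h3 := Finset.card_nsmul_le_sum (Finset.univ.erase l)
      (fun l' => G.dvg f (vs l')) (-1 : ℤ) h2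
    have h4 : ∑ l', G.dvg f (vs l') =
        G.dvg f (vs l) + ∑ l' ∈ Finset.univ.erase l, G.dvg f (vs l') :=
      (Finset.add_sum_erase _ _ (Finset.mem_univ l)).symm
    have h5 : (Finset.univ.erase l).card = i - 1 := by
      rw [Finset.card_erase_of_mem (Finset.mem_univ l), Finset.card_univ, Fintype.card_fin]
    rw [h5] at h3
    rw [hl0] at h4
    rw [h4] at hsum
    simp only [nsmul_eq_mul, mul_neg, mul_one] at h3
    have hi1 : (1 : ℤ) ≤ (i : ℤ) := by exact_mod_cast hi
    have hcast : ((i - 1 : ℕ) : ℤ) = (i : ℤ) - 1 := by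
      have : 1 ≤ i := hi
      push_cast [this]
      ring
    rw [hcast] at h3
    omega
  obtain ⟨W, hWg, hWdisj⟩ := decomp v vs hinj hv i f hb hdv htar hzero
  have hby : ∀ l : Fin i, ∃ P : G.Walk v (vs l), P.IsPath ∧
      ∀ e ∈ P.edges, e ∈ (W l (hall l)).edges := by
    intro l
    obtain ⟨P, hp, hd⟩ := Walk.exists_bypass (W l (hall l))
    refine ⟨P, hp, fun e he => ?_⟩
    rw [Walk.edges_eq_darts_map] at he
    obtain ⟨d, hd1, hd2⟩ := List.mem_map.mp he
    exact hd2 ▸ Walk.mem_edges_of_mem_darts (hd d hd1)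
  choose P hPpath hPsub using hby
  refine ⟨P, hPpath, ?_⟩
  intro l l' hll e he he'
  exact hWdisj l l' (hall l) (hall l') hll e (hPsub l e he) (hPsub l' e he')

end Multigraph
end
end

section
/- Let G be a graph and let G^s be the graph obtained from G by subdividing every edge of G exactly once. Then G^s contains K_{3,3} as an immersion if and only if G contains K_{3,3} as an immersion. -/
attribute [local instance] Classical.propDecidable

set_option autoImplicit false

noncomputable section

namespace Multigraph
variable {G : Multigraph}

lemma sym2_exists_rep {α : Type} (z : Sym2 α) : ∃ a b, z = s(a, b) :=
  Sym2.ind (fun a b => ⟨a, b, rfl⟩) z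

lemma start_mem_support : ∀ {u v : G.V} (w : G.Walk u v), u ∈ w.support
  | _, _, .nil => List.mem_singleton.mpr rfl
  | _, _, .cons _ _ _ => List.mem_cons_self

lemma mem_support_of_mem_edges : ∀ {u v : G.V} (w : G.Walk u v) (e : G.E),
    e ∈ w.edges → ∀ x ∈ G.ends e, x ∈ w.support
  | _, _, .nil, e, he => absurd he (by simp [Walk.edges])
  | u, v, .cons e' h t, e, he => by
    intro x hx
    simp only [Walk.edges, List.mem_cons] at he
    simp only [Walk.support, List.mem_cons]
    rcases he with rfl | he
    · rw [h, Sym2.mem_iff] at hx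
      rcases hx with rfl | rfl
      · exact Or.inl rfl
      · exact Or.inr (start_mem_support t)
    · exact Or.inr (mem_support_of_mem_edges t e he x hx)

/-- Lift a walk of `G` to a walk of the subdivision. -/
def liftWalk : ∀ {u v : G.V}, G.Walk u v → G.subdivision.Walk (Sum.inl u) (Sum.inl v)
  | _, _, .nil => .nil
  | u, _, .cons (v := m) e h t =>
    .cons ⟨e, ⟨u, by rw [h]; exact Sym2.mem_mk_left _ _⟩⟩ rfl
      (.cons ⟨e, ⟨m, by rw [h]; exact Sym2.mem_mk_right _ _⟩⟩ Sym2.eq_swap (liftWalk t))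

lemma liftWalk_edges_fst : ∀ {u v : G.V} (w : G.Walk u v) (s : G.subdivision.E),
    s ∈ (liftWalk w).edges → s.1 ∈ w.edges
  | _, _, .nil, s, hs => absurd hs (by simp [liftWalk, Walk.edges])
  | u, _, .cons (v := m) e h t, s, hs => by
    simp only [liftWalk, Walk.edges, List.mem_cons] at hs
    simp only [Walk.edges, List.mem_cons]
    rcases (List.mem_cons.mp hs).imp_right List.mem_cons.mp with rfl | rfl | hs
    · exact Or.inl rfl
    · exact Or.inl rfl
    · exact Or.inr (liftWalk_edges_fst t s hs)

lemma mem_support_liftWalk : ∀ {u v : G.V} (w : G.Walk u v) (x : G.subdivision.V),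
    x ∈ (liftWalk w).support →
    (∃ a ∈ w.support, x = Sum.inl a) ∨ ∃ e ∈ w.edges, x = Sum.inr e
  | u, _, .nil, x, hx => by
    simp only [liftWalk, Walk.support, List.mem_singleton] at hx
    exact Or.inl ⟨u, by simp [Walk.support], List.mem_singleton.mp hx⟩
  | u, _, .cons (v := m) e h t, x, hx => by
    simp only [liftWalk, Walk.support, List.mem_cons] at hx
    rcases (List.mem_cons.mp hx).imp_right List.mem_cons.mp with rfl | rfl | hx
    · exact Or.inl ⟨u, by simp [Walk.support], rfl⟩
    · exact Or.inr ⟨e, by simp [Walk.edges], rfl⟩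
    · rcases mem_support_liftWalk t x hx with ⟨a, ha, rfl⟩ | ⟨e', he', rfl⟩
      · exact Or.inl ⟨a, by simp [Walk.support, ha], rfl⟩
      · exact Or.inr ⟨e', by simp [Walk.edges, he'], rfl⟩

lemma liftWalk_isPath : ∀ {u v : G.V} (w : G.Walk u v), w.IsPath → (liftWalk w).IsPath
  | _, _, .nil, _ => by exact List.nodup_singleton _
  | u, _, .cons (v := m) e h t, hp => by
    have hp' : (u :: t.support).Nodup := hp
    rw [List.nodup_cons] at hp'
    obtain ⟨hu, ht⟩ := hp'
    have ih := liftWalk_isPath t ht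
    show (Sum.inl u :: Sum.inr e :: (liftWalk t).support : List G.subdivision.V).Nodup
    refine List.nodup_cons.mpr ⟨?_, List.nodup_cons.mpr ⟨?_, ih⟩⟩
    · intro hmem
      rcases List.mem_cons.mp hmem with heq | hmem'
      · cases heq
      · rcases mem_support_liftWalk t _ hmem' with ⟨a, ha, haeq⟩ | ⟨e', _, heq⟩
        · exact hu (by rw [Sum.inl.inj haeq]; exact ha)
        · cases heq
    · intro hmem
      rcases mem_support_liftWalk t _ hmem with ⟨a, _, haeq⟩ | ⟨e', he', heq⟩
      · cases haeq
      · have he2 : e ∈ t.edges := by rw [Sum.inr.inj heq]; exact he'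
        exact hu (mem_support_of_mem_edges t e he2 u (by rw [h]; exact Sym2.mem_mk_left _ _))

/-- A walk in the subdivision with distinct endpoints, one of them the subdivision vertex
of `e`, uses an edge coming from `e`. -/
lemma exists_edge_at {e : G.E} : ∀ {a b : G.subdivision.V} (W : G.subdivision.Walk a b),
    a ≠ b → (a = Sum.inr e ∨ b = Sum.inr e) → ∃ s ∈ W.edges, s.1 = e
  | a, _, .nil => fun hne _ => absurd rfl hne
  | a, b, .cons (v := m) s h t => fun hne hab => by
    by_cases hae : a = Sum.inr e
    · have h' : (Sum.inr e : G.subdivision.V) ∈ s(Sum.inl s.2.1, Sum.inr s.1) := by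
        rw [show s(Sum.inl s.2.1, Sum.inr s.1) = G.subdivision.ends s from rfl, h, ← hae]
        exact Sym2.mem_mk_left _ _
      rcases Sym2.mem_iff.mp h' with h'' | h''
      · cases h''
      · exact ⟨s, by simp [Walk.edges], (Sum.inr.inj h'').symm⟩
    · have hb : b = Sum.inr e := hab.resolve_left hae
      by_cases hm : m = Sum.inr e
      · have h' : (Sum.inr e : G.subdivision.V) ∈ s(Sum.inl s.2.1, Sum.inr s.1) := by
          rw [show s(Sum.inl s.2.1, Sum.inr s.1) = G.subdivision.ends s from rfl, h, ← hm]
          exact Sym2.mem_mk_right _ _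
        rcases Sym2.mem_iff.mp h' with h'' | h''
        · cases h''
        · exact ⟨s, by simp [Walk.edges], (Sum.inr.inj h'').symm⟩
      · obtain ⟨s', hs', hfst⟩ := exists_edge_at t (fun hq => hm (hq.trans hb)) (Or.inr hb)
        exact ⟨s', by simp only [Walk.edges, List.mem_cons]; exact Or.inr hs', hfst⟩

/-- Projection of a path of the subdivision between two branch vertices down to `G`. -/
lemma project : ∀ (n : ℕ) {x y : G.subdivision.V} (W : G.subdivision.Walk x y),
    W.edges.length ≤ n → W.support.Nodup → ∀ (u v : G.V), x = Sum.inl u → y = Sum.inl v →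
    ∃ w : G.Walk u v, w.support.Nodup ∧ (∀ a ∈ w.support, Sum.inl a ∈ W.support) ∧
      ∀ e ∈ w.edges, ∀ z (hz : z ∈ G.ends e), (⟨e, ⟨z, hz⟩⟩ : G.subdivision.E) ∈ W.edges := by
  intro n
  induction n with
  | zero =>
    intro x y W hlen hnd u v hx hy
    cases W with
    | nil =>
      obtain rfl : u = v := Sum.inl.inj (hx.symm.trans hy)
      refine ⟨.nil, by simp [Walk.support], ?_, by simp [Walk.edges]⟩
      intro a ha
      simp only [Walk.support, List.mem_singleton] at ha ⊢
      rw [ha, ← hx]; exact List.mem_singleton_self _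
    | cons s h t => exact absurd hlen (by simp [Walk.edges])
  | succ n ih =>
    intro x y W hlen hnd u v hx hy
    cases W with
    | nil =>
      obtain rfl : u = v := Sum.inl.inj (hx.symm.trans hy)
      refine ⟨.nil, by simp [Walk.support], ?_, by simp [Walk.edges]⟩
      intro a ha
      simp only [Walk.support, List.mem_singleton] at ha ⊢
      rw [ha, ← hx]; exact List.mem_singleton_self _
    | cons s h t =>
      subst hx
      obtain ⟨e₁, x₁, hx₁⟩ := s
      have h0 : s(Sum.inl x₁, Sum.inr e₁) = s(Sum.inl u, _) := h
      replace h0 := Sym2.eq_iff.mp h0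
      rcases h0 with ⟨h1, h2⟩ | ⟨h1, h2⟩
      swap
      · exact absurd h2 (fun hq => by cases hq)
      have h1' : x₁ = u := Sum.inl.inj h1
      have hu1 : u ∈ G.ends e₁ := h1' ▸ hx₁
      subst h2
      rcases t with _ | ⟨s', h', t''⟩
      · exact absurd hy (fun hq => by cases hq)
      ·
        obtain ⟨e₂, x₂, hx₂⟩ := s'
        have h0' : s(Sum.inl x₂, Sum.inr e₂) = s(Sum.inr e₁, _) := h'
        replace h0' := Sym2.eq_iff.mp h0'
        rcases h0' with ⟨c1, c2⟩ | ⟨c1, c2⟩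
        · exact absurd c1 (fun hq => by cases hq)
        have hee : e₂ = e₁ := Sum.inr.inj c2
        have hx₂' : x₂ ∈ G.ends e₁ := hee ▸ hx₂
        subst c1
        -- now t'' : Walk (inl x₂) y
        have hlen' : t''.edges.length ≤ n := by
          have hl2 : t''.edges.length + 1 + 1 ≤ n + 1 := hlen; omega
        simp only [Walk.support] at hnd
        replace hnd := (List.nodup_cons.mp hnd).imp_right List.nodup_cons.mp
        obtain ⟨hnd1, hnd2, hnd3⟩ := hnd
        obtain ⟨w', hw'nd, hw'sup, hw'edge⟩ := ih t'' hlen' hnd3 x₂ v rfl hy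
        have hstart : (Sum.inl x₂ : G.subdivision.V) ∈ t''.support := start_mem_support t''
        have hune : u ≠ x₂ := fun hq => hnd1 (by
          refine List.mem_cons.mpr ?_; exact Or.inr (by rw [hq]; exact hstart))
        have hends2 : G.ends e₁ = s(u, x₂) :=
          (Sym2.mem_and_mem_iff hune).mp ⟨hu1, hx₂'⟩
        refine ⟨.cons e₁ hends2 w', ?_, ?_, ?_⟩
        · show (u :: w'.support).Nodup
          rw [List.nodup_cons]
          refine ⟨fun hmem => ?_, hw'nd⟩
          exact hnd1 (by refine List.mem_cons.mpr ?_; exact Or.inr (hw'sup u hmem))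
        · intro a ha
          simp only [Walk.support, List.mem_cons] at ha ⊢
          rcases ha with rfl | ha
          · exact List.mem_cons.mpr (Or.inl rfl)
          · exact List.mem_cons.mpr (Or.inr (List.mem_cons.mpr (Or.inr (hw'sup a ha))))
        · intro e he z hz
          simp only [Walk.edges, List.mem_cons] at he ⊢
          rcases he with rfl | he
          · rw [hends2, Sym2.mem_iff] at hz
            rcases hz with rfl | rfl
            · exact List.mem_cons.mpr (Or.inl (by subst h1'; rfl))
            · exact List.mem_cons.mpr (Or.inr (List.mem_cons.mpr (Or.inl (by subst hee; rfl))))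
          · exact List.mem_cons.mpr (Or.inr (List.mem_cons.mpr (Or.inr (hw'edge e he z hz))))

theorem statement9 (G : Multigraph) :
    Immersion K33 G.subdivision ↔ Immersion K33 G := by
  constructor
  · rintro ⟨f, finj, P, hpath, hends, hdisj⟩
    -- Step 1: f lands in the branch vertices
    have hinl : ∀ u : K33.V, ∃ a : G.V, f u = Sum.inl a := by
      intro u
      cases hfu : f u with
      | inl a => exact ⟨a, rfl⟩
      | inr e =>
        exfalso
        obtain ⟨es, esinj, hes⟩ : ∃ es : Fin 3 → K33.E, Function.Injective es ∧
            ∀ k, ∃ w, w ≠ u ∧ K33.ends (es k) = s(u, w) := by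
          cases u with
          | inl i =>
            exact ⟨fun k => (i, k), fun a b hab => congrArg Prod.snd hab,
              fun k => ⟨Sum.inr k, Sum.inr_ne_inl, rfl⟩⟩
          | inr j =>
            refine ⟨fun k => (k, j), fun a b hab => congrArg Prod.fst hab,
              fun k => ⟨Sum.inl k, Sum.inl_ne_inr, ?_⟩⟩
            exact Sym2.eq_swap
        have hedge : ∀ k : Fin 3, ∃ s ∈ (P (es k)).2.2.edges, s.1 = e := by
          intro k
          obtain ⟨w, hw, hwends⟩ := hes k
          have h1 := hends (es k)
          rw [hwends, Sym2.map_pair_eq, Sym2.eq_iff] at h1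
          have hne : f u ≠ f w := fun hq => hw (finj hq).symm
          rcases h1 with ⟨h1a, h1b⟩ | ⟨h1a, h1b⟩
          · exact exists_edge_at (P (es k)).2.2
              (fun hq => hne (h1a.trans (hq.trans h1b.symm)))
              (Or.inl (h1a.symm.trans hfu))
          · exact exists_edge_at (P (es k)).2.2
              (fun hq => hne (h1a.trans (hq.symm.trans h1b.symm)))
              (Or.inr (h1a.symm.trans hfu))
        have hnee : ∀ i j : Fin 3, i ≠ j → ∀ q, q ∈ (P (es i)).2.2.edges →
            q ∉ (P (es j)).2.2.edges := fun i j hij =>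
          hdisj (es i) (es j) (fun hq2 => hij (esinj hq2))
        obtain ⟨a, b, hab⟩ := sym2_exists_rep (G.ends e)
        obtain ⟨s0, hs0, hf0⟩ := hedge 0
        obtain ⟨s1, hs1, hf1⟩ := hedge 1
        obtain ⟨s2, hs2, hf2⟩ := hedge 2
        obtain ⟨s0e, s0x, s0h⟩ := s0
        obtain ⟨s1e, s1x, s1h⟩ := s1
        obtain ⟨s2e, s2x, s2h⟩ := s2
        dsimp at hf0 hf1 hf2
        have h0e := hf0.symm; subst h0e
        have h1e := hf1.symm; subst h1e
        have h2e := hf2.symm; subst h2e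
        have hm0 : s0x = a ∨ s0x = b := Sym2.mem_iff.mp (hab ▸ s0h)
        have hm1 : s1x = a ∨ s1x = b := Sym2.mem_iff.mp (hab ▸ s1h)
        have hm2 : s2x = a ∨ s2x = b := Sym2.mem_iff.mp (hab ▸ s2h)
        have hne01 : s0x ≠ s1x := fun hq => by
          subst hq; exact hnee 0 1 (by decide) _ hs0 hs1
        have hne02 : s0x ≠ s2x := fun hq => by
          subst hq; exact hnee 0 2 (by decide) _ hs0 hs2
        have hne12 : s1x ≠ s2x := fun hq => by
          subst hq; exact hnee 1 2 (by decide) _ hs1 hs2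
        rcases hm0 with h0 | h0 <;> rcases hm1 with h1 | h1 <;> rcases hm2 with h2 | h2 <;>
          first
          | exact hne01 (h0.trans h1.symm)
          | exact hne02 (h0.trans h2.symm)
          | exact hne12 (h1.trans h2.symm)
    choose g hg using hinl
    have ginj : Function.Injective g := fun a b hq =>
      finj (by rw [hg a, hg b, hq])
    -- Step 2: project the paths
    have hQ : ∀ e : K33.E, ∃ Q : Σ a : G.V, Σ b : G.V, G.Walk a b,
        Q.2.2.IsPath ∧ (K33.ends e).map g = s(Q.1, Q.2.1) ∧
        ∀ z ∈ Q.2.2.edges, ∀ x (hx : x ∈ G.ends z),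
          (⟨z, ⟨x, hx⟩⟩ : G.subdivision.E) ∈ (P e).2.2.edges := by
      intro e
      have h1 : s(Sum.inl (g (Sum.inl e.1)), Sum.inl (g (Sum.inr e.2))) = s((P e).1, (P e).2.1) :=
        (congrArg₂ (fun a b => s(a, b)) (hg _) (hg _)).symm.trans (hends e)
      replace h1 := Sym2.eq_iff.mp h1
      have hmap : (K33.ends e).map g = s(g (Sum.inl e.1), g (Sum.inr e.2)) :=
        Sym2.map_pair_eq g _ _
      rcases h1 with ⟨ha, hb⟩ | ⟨ha, hb⟩
      · obtain ⟨w, hw1, _, hw3⟩ := project (G := G) (P e).2.2.edges.length (P e).2.2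
          le_rfl (hpath e) _ _ ha.symm hb.symm
        exact ⟨⟨_, _, w⟩, hw1, hmap, hw3⟩
      · obtain ⟨w, hw1, _, hw3⟩ := project (G := G) (P e).2.2.edges.length (P e).2.2
          le_rfl (hpath e) _ _ hb.symm ha.symm
        exact ⟨⟨_, _, w⟩, hw1, by rw [hmap]; exact Sym2.eq_swap, hw3⟩
    choose Q hQ1 hQ2 hQ3 using hQ
    refine ⟨g, ginj, Q, hQ1, hQ2, ?_⟩
    intro e e' hne z hz hz'
    obtain ⟨xx, yy, hxy⟩ := sym2_exists_rep (G.ends z)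
    have hx : xx ∈ G.ends z := by rw [hxy]; exact Sym2.mem_mk_left _ _
    exact hdisj e e' hne _ (hQ3 e z hz xx hx) (hQ3 e' z hz' xx hx)
  · rintro ⟨g, ginj, P, hpath, hends, hdisj⟩
    refine ⟨Sum.inl ∘ g, fun a b hq => ginj (Sum.inl.inj hq),
      fun e => ⟨Sum.inl (P e).1, Sum.inl (P e).2.1, liftWalk (P e).2.2⟩,
      fun e => liftWalk_isPath _ (hpath e), ?_, ?_⟩
    · intro e
      show (K33.ends e).map (Sum.inl ∘ g) = _
      rw [← Sym2.map_map, hends e, Sym2.map_pair_eq]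
      rfl
    · intro e e' hne s hs hs'
      exact hdisj e e' hne s.1 (liftWalk_edges_fst _ s hs) (liftWalk_edges_fst _ s hs')

end Multigraph
end
end
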